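/- arXiv:2304.11471 — 6 statements merged into one kernel-verified Lean document; each statement's English description precedes it below -/
import Mathlib

section
/- Let p be a prime number with p ≡ 3 (mod 4) and let e ≥ 2 be an integer. Then p^e divides u(n) for all integers n ≥ ⌊(e−1)p²/2⌋. -/
/-- `Π₁(N) = ∏_{j=1}^{N} (4j−1)²`. -/
def Pi1 (N : ℕ) : ℤ := ∏ j ∈ Finset.Icc 1 N, (4 * (j : ℤ) - 1) ^ 2

/-- `Π₃(N) = ∏_{j=1}^{N} (4j−3)²`. -/
def Pi3 (N : ℕ) : ℤ := ∏ j ∈ Finset.Icc 1 N, (4 * (j : ℤ) - 3) ^ 2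

/-- generic: if `j₀, j₀+p, …, j₀+(L-1)p` all lie in `[1,k]` and `p ∣ 4j₀ - c`
and `(p:ℤ) ∣ 4p` trivially, then `p^(2L)` divides `∏_{j=1}^k (4j-c)^2`. -/
lemma pow_dvd_prod_sq (p : ℕ) (hp : 0 < p) (c : ℤ) (j₀ L k : ℕ) (hj : 1 ≤ j₀)
    (h0 : (p : ℤ) ∣ 4 * (j₀ : ℤ) - c)
    (hle : j₀ + (L - 1) * p ≤ k) (hL : 1 ≤ L) :
    (p : ℤ) ^ (2 * L) ∣ ∏ j ∈ Finset.Icc 1 k, (4 * (j : ℤ) - c) ^ 2 := by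
  classical
  set S : Finset ℕ := (Finset.range L).image (fun i => j₀ + i * p) with hS
  have hinj : ∀ i ∈ Finset.range L, ∀ i' ∈ Finset.range L,
      j₀ + i * p = j₀ + i' * p → i = i' := by
    intro i _ i' _ h
    have : i * p = i' * p := by omega
    exact Nat.eq_of_mul_eq_mul_right hp this
  have hsub : S ⊆ Finset.Icc 1 k := by
    intro j hj'
    simp only [hS, Finset.mem_image, Finset.mem_range] at hj'
    obtain ⟨i, hi, rfl⟩ := hj'
    have : i * p ≤ (L - 1) * p := Nat.mul_le_mul_right p (by omega)
    simp only [Finset.mem_Icc]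
    omega
  have h1 : ∏ j ∈ S, (4 * (j : ℤ) - c) ^ 2 ∣ ∏ j ∈ Finset.Icc 1 k, (4 * (j : ℤ) - c) ^ 2 :=
    Finset.prod_dvd_prod_of_subset S _ _ hsub
  have h2 : ∏ j ∈ S, (4 * (j : ℤ) - c) ^ 2
      = ∏ i ∈ Finset.range L, (4 * ((j₀ + i * p : ℕ) : ℤ) - c) ^ 2 := by
    rw [hS, Finset.prod_image hinj]
  have h3 : (p : ℤ) ^ (2 * L) ∣ ∏ i ∈ Finset.range L, (4 * ((j₀ + i * p : ℕ) : ℤ) - c) ^ 2 := by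
    have : (p : ℤ) ^ (2 * L) = ∏ _i ∈ Finset.range L, ((p : ℤ)) ^ 2 := by
      rw [Finset.prod_const, Finset.card_range, ← pow_mul, mul_comm]
    rw [this]
    refine Finset.prod_dvd_prod_of_dvd _ _ (fun i _ => ?_)
    refine pow_dvd_pow_of_dvd ?_ 2
    have : (4 * ((j₀ + i * p : ℕ) : ℤ) - c) = (4 * (j₀ : ℤ) - c) + (i : ℤ) * p * 4 := by
      push_cast; ring
    rw [this]
    exact dvd_add h0 ⟨(i : ℤ) * 4, by ring⟩
  calc (p : ℤ) ^ (2 * L) ∣ ∏ j ∈ S, (4 * (j : ℤ) - c) ^ 2 := by rw [h2]; exact h3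
    _ ∣ _ := h1


lemma kummer_two (p : ℕ) (hp : p.Prime) (x y : ℕ) :
    (p : ℤ) ^ ((if p ≤ x % p + y % p then 1 else 0)
      + (if p ^ 2 ≤ x % p ^ 2 + y % p ^ 2 then 1 else 0)) ∣ ((x + y).choose x : ℤ) := by
  classical
  haveI := Fact.mk hp
  set b := x + y + 3 with hb
  have hlog : Nat.log p (y + x) < b := by
    have := Nat.log_le_self p (y + x); omega
  have hv := padicValNat_choose' (p := p) (k := x) (n := y) hlog
  set a := (if p ≤ x % p + y % p then 1 else 0)
      + (if p ^ 2 ≤ x % p ^ 2 + y % p ^ 2 then 1 else 0) with ha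
  have hcard : a ≤ ((Finset.Ico 1 b).filter fun i => p ^ i ≤ x % p ^ i + y % p ^ i).card := by
    by_cases h1 : p ≤ x % p + y % p <;> by_cases h2 : p ^ 2 ≤ x % p ^ 2 + y % p ^ 2
    · have hsub : ({1, 2} : Finset ℕ) ⊆
          (Finset.Ico 1 b).filter fun i => p ^ i ≤ x % p ^ i + y % p ^ i := by
        intro i hi
        simp only [Finset.mem_insert, Finset.mem_singleton] at hi
        rcases hi with rfl | rfl <;>
          simp only [Finset.mem_filter, Finset.mem_Ico] <;>
          constructor <;> first | omega | simpa using h1 | simpa using h2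
      have := Finset.card_le_card hsub
      simp only [ha]
      rw [if_pos h1, if_pos h2]
      have h12 : ({1, 2} : Finset ℕ).card = 2 := by decide
      omega
    · have hsub : ({1} : Finset ℕ) ⊆
          (Finset.Ico 1 b).filter fun i => p ^ i ≤ x % p ^ i + y % p ^ i := by
        intro i hi
        simp only [Finset.mem_singleton] at hi
        subst hi
        simp only [Finset.mem_filter, Finset.mem_Ico]
        constructor
        · omega
        · simpa using h1
      have := Finset.card_le_card hsub
      simp only [ha]
      rw [if_pos h1, if_neg h2]
      simp only [Finset.card_singleton] at this
      omega
    · have hsub : ({2} : Finset ℕ) ⊆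
          (Finset.Ico 1 b).filter fun i => p ^ i ≤ x % p ^ i + y % p ^ i := by
        intro i hi
        simp only [Finset.mem_singleton] at hi
        subst hi
        simp only [Finset.mem_filter, Finset.mem_Ico]
        constructor
        · omega
        · simpa using h2
      have := Finset.card_le_card hsub
      simp only [ha]
      rw [if_neg h1, if_pos h2]
      simp only [Finset.card_singleton] at this
      omega
    · simp [ha, h1, h2]
  have hdvd : p ^ a ∣ (x + y).choose x := by
    have h1 : p ^ a ∣ p ^ padicValNat p ((x + y).choose x) := by
      apply pow_dvd_pow
      rw [show x + y = y + x by omega, hv]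
      exact hcard
    exact h1.trans pow_padicValNat_dvd
  exact_mod_cast Int.natCast_dvd_natCast.mpr hdvd

def wt (p n : ℕ) : ℕ :=
  if 2 * n + 1 < p ^ 2 then (if (2 * n + 1) % p < (2 * n + 1) / p then 1 else 0)
  else (2 * n + 1) / p ^ 2 + 1

section
variable {p w : ℕ} (hp : p.Prime) (h4w : 4 * w = p + 1) (hp3 : 3 ≤ p)

include hp h4w hp3

lemma pi3_dvd_one {k : ℕ} (hk : 3 * w ≤ k) : (p : ℤ) ^ 2 ∣ Pi3 k := by
  have hcast : (4 : ℤ) * w = p + 1 := by exact_mod_cast h4w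
  have h := pow_dvd_prod_sq p hp.pos 3 (3 * w) 1 k (by omega)
    (⟨3, by push_cast; linarith⟩)
    (by simpa using hk) le_rfl
  simpa [Pi3] using h

lemma pi3_dvd_t {k : ℕ} (ht : 1 ≤ 2 * k / p ^ 2) :
    (p : ℤ) ^ (2 * k / p ^ 2 + 1) ∣ Pi3 k := by
  have hcast : (4 : ℤ) * w = p + 1 := by exact_mod_cast h4w
  set t := 2 * k / p ^ 2 with hts
  set s := t / 2 with hss
  have htp : t * p ^ 2 ≤ 2 * k := by rw [hts]; exact Nat.div_mul_le_self _ _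
  have hA : p ≤ t * p := Nat.le_mul_of_pos_left p (by omega)
  have hmain : 3 * p + 3 + 2 * (t * p) ≤ 2 * (t * p ^ 2) := by
    have h6 : 3 * p + 3 + 2 * (t * p) ≤ 6 * (t * p) := by omega
    have h7 : 6 * (t * p) ≤ 2 * (t * p) * p :=
      le_trans (by omega) (Nat.mul_le_mul_left (2 * (t * p)) hp3)
    have h8 : 2 * (t * p) * p = 2 * (t * p ^ 2) := by ring
    omega
  have hle : 3 * w + s * p ≤ k := by
    have h2s : (2 * s) * p ≤ t * p := Nat.mul_le_mul_right p (by omega)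
    have h2 : 4 * (3 * w + s * p) ≤ 4 * k := by
      have e1 : 4 * (3 * w + s * p) = 3 * (4 * w) + 2 * ((2 * s) * p) := by ring
      omega
    omega
  have h := pow_dvd_prod_sq p hp.pos 3 (3 * w) (s + 1) k (by omega)
    (⟨3, by push_cast; linarith⟩)
    (by simpa using hle) (by omega)
  refine dvd_trans (pow_dvd_pow _ ?_) (by simpa [Pi3] using h)
  omega

lemma pi1_dvd {n : ℕ} : (p : ℤ) ^ (wt p n) ∣ Pi1 n := by
  have hcast : (4 : ℤ) * w = p + 1 := by exact_mod_cast h4w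
  by_cases hz : 2 * n + 1 < p ^ 2
  · by_cases hcond : (2 * n + 1) % p < (2 * n + 1) / p
    · have hdiv : 1 ≤ (2 * n + 1) / p := by omega
      have hpn : p ≤ 2 * n + 1 := (Nat.one_le_div_iff hp.pos).mp hdiv
      have hwn : w ≤ n := by omega
      have h := pow_dvd_prod_sq p hp.pos 1 w 1 n (by omega)
        (⟨1, by push_cast; linarith⟩)
        (by simpa using hwn) le_rfl
      have hwt : wt p n = 1 := by simp [wt, hz, hcond]
      rw [hwt]
      refine dvd_trans (pow_dvd_pow _ ?_) (by simpa [Pi1] using h)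
      omega
    · have hwt : wt p n = 0 := by simp [wt, hz, hcond]
      rw [hwt]; exact one_dvd _
  · set q := (2 * n + 1) / p ^ 2 with hqs
    have hq1 : 1 ≤ q := by
      rw [hqs]; exact (Nat.one_le_div_iff (by positivity)).mpr (by omega)
    have hqp : q * p ^ 2 ≤ 2 * n + 1 := by rw [hqs]; exact Nat.div_mul_le_self _ _
    set s := q / 2 with hss
    have hA : p ≤ q * p := Nat.le_mul_of_pos_left p (by omega)
    have hmain : p + 3 + 2 * (q * p) ≤ 2 * (q * p ^ 2) := by
      have h6 : p + 3 + 2 * (q * p) ≤ 6 * (q * p) := by omega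
      have h7 : 6 * (q * p) ≤ 2 * (q * p) * p :=
        le_trans (by omega) (Nat.mul_le_mul_left (2 * (q * p)) hp3)
      have h8 : 2 * (q * p) * p = 2 * (q * p ^ 2) := by ring
      omega
    have hle : w + s * p ≤ n := by
      have h2s : (2 * s) * p ≤ q * p := Nat.mul_le_mul_right p (by omega)
      have h2 : 4 * (w + s * p) ≤ 4 * n := by
        have e1 : 4 * (w + s * p) = (4 * w) + 2 * ((2 * s) * p) := by ring
        omega
      omega
    have h := pow_dvd_prod_sq p hp.pos 1 w (s + 1) n (by omega)
      (⟨1, by push_cast; linarith⟩)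
      (by simpa using hle) (by omega)
    have hwt : wt p n = q + 1 := by simp [wt, hz, hqs]
    rw [hwt]
    refine dvd_trans (pow_dvd_pow _ ?_) (by simpa [Pi1] using h)
    omega

end



lemma wt_step {p w : ℕ} (hp : p.Prime) (h4w : 4 * w = p + 1) (hp3 : 3 ≤ p)
    {m n : ℕ} (hmn : m < n) {c : ℤ} (hc : (p : ℤ) ^ (wt p m) ∣ c) :
    (p : ℤ) ^ (wt p n) ∣ ((2 * n + 1).choose (2 * m + 1) : ℤ) * Pi3 (n - m) * c := by
  have hodd : p % 2 = 1 := Nat.odd_iff.mp (hp.odd_of_ne_two (by omega))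
  have hpp : p ^ 2 = p * p := sq p
  have hp2pos : 0 < p ^ 2 := by positivity
  set k := n - m with hkeq
  have hk1 : 1 ≤ k := by omega
  set x := 2 * m + 1 with hxeq
  have hzxy : 2 * n + 1 = x + 2 * k := by omega
  rw [hzxy]
  have hK := kummer_two p hp x (2 * k)
  have hdp : (x + 2 * k) / p = x / p + 2 * k / p
      + (if p ≤ x % p + 2 * k % p then 1 else 0) := Nat.add_div hp.pos
  have hdp2 : (x + 2 * k) / p ^ 2 = x / p ^ 2 + 2 * k / p ^ 2
      + (if p ^ 2 ≤ x % p ^ 2 + 2 * k % p ^ 2 then 1 else 0) := Nat.add_div hp2pos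
  have combine : ∀ a b : ℕ, (p : ℤ) ^ a ∣ ((x + 2 * k).choose x : ℤ) → (p : ℤ) ^ b ∣ Pi3 k →
      wt p n ≤ a + b + wt p m →
      (p : ℤ) ^ (wt p n) ∣ ((x + 2 * k).choose x : ℤ) * Pi3 k * c := by
    intro a b hA hB hsum
    refine dvd_trans (pow_dvd_pow _ hsum) ?_
    rw [pow_add, pow_add]
    exact mul_dvd_mul (mul_dvd_mul hA hB) hc
  have hxmodlt : x % p < p := Nat.mod_lt _ hp.pos
  have hymodlt : 2 * k % p < p := Nat.mod_lt _ hp.pos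
  have hxdm : p * (x / p) + x % p = x := Nat.div_add_mod x p
  have hxm2 : x % p ^ 2 < p ^ 2 := Nat.mod_lt _ hp2pos
  have hym2 : 2 * k % p ^ 2 < p ^ 2 := Nat.mod_lt _ hp2pos
  have hwtn : wt p n = if x + 2 * k < p ^ 2 then
      (if (x + 2 * k) % p < (x + 2 * k) / p then 1 else 0)
      else (x + 2 * k) / p ^ 2 + 1 := by
    rw [wt, hzxy]
  have hwtm : wt p m = if x < p ^ 2 then (if x % p < x / p then 1 else 0)
      else x / p ^ 2 + 1 := by
    rw [wt, ← hxeq]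
  by_cases hz2 : x + 2 * k < p ^ 2
  · -- small case
    by_cases hcond : (x + 2 * k) % p < (x + 2 * k) / p
    · have hwn1 : wt p n = 1 := by rw [hwtn, if_pos hz2, if_pos hcond]
      by_cases hk3 : 3 * w ≤ k
      · exact combine 0 2 (one_dvd _) (pi3_dvd_one hp h4w hp3 hk3) (by omega)
      · have hylt : 2 * k < 2 * p := by omega
        have hydiv : 2 * k / p ≤ 1 :=
          Nat.lt_succ_iff.mp ((Nat.div_lt_iff_lt_mul hp.pos).mpr (by omega))
        by_cases hC1' : p ≤ x % p + 2 * k % p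
        · rw [if_pos hC1'] at hK
          have hK1 : (p : ℤ) ^ 1 ∣ ((x + 2 * k).choose x : ℤ) :=
            (pow_dvd_pow _ (Nat.le_add_right 1 _)).trans hK
          exact combine 1 0 hK1 (one_dvd _) (by omega)
        · have hmodp : (x + 2 * k) % p = x % p + 2 * k % p := by
            rw [Nat.add_mod, Nat.mod_eq_of_lt (by omega)]
          rw [if_neg hC1'] at hdp
          by_cases hm : x % p < x / p
          · have hwm1 : wt p m = 1 := by
              rw [hwtm, if_pos (by omega), if_pos hm]
            exact combine 0 0 (one_dvd _) (one_dvd _) (by omega)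
          · exfalso
            have hy1 : 2 * k % p < 2 * k / p := by omega
            have hyd1 : 2 * k / p = 1 := by omega
            have hyd0 : 2 * k % p = 0 := by omega
            have hy := Nat.div_add_mod (2 * k) p
            rw [hyd1, hyd0] at hy
            omega
    · have hwn0 : wt p n = 0 := by rw [hwtn, if_pos hz2, if_neg hcond]
      exact combine 0 0 (one_dvd _) (one_dvd _) (by omega)
  · -- big case
    have hzq : 1 ≤ (x + 2 * k) / p ^ 2 := (Nat.one_le_div_iff hp2pos).mpr (by omega)
    have hwnq : wt p n = (x + 2 * k) / p ^ 2 + 1 := by rw [hwtn, if_neg hz2]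
    by_cases hx2 : x < p ^ 2
    · have hxq0 : x / p ^ 2 = 0 := Nat.div_eq_of_lt hx2
      by_cases ht : 1 ≤ 2 * k / p ^ 2
      · have hB := pi3_dvd_t hp h4w hp3 (k := k) ht
        by_cases hC2' : p ^ 2 ≤ x % p ^ 2 + 2 * k % p ^ 2
        · rw [if_pos hC2'] at hdp2 hK
          have hK1 : (p : ℤ) ^ 1 ∣ ((x + 2 * k).choose x : ℤ) :=
            (pow_dvd_pow _ (Nat.le_add_left 1 _)).trans hK
          exact combine 1 (2 * k / p ^ 2 + 1) hK1 hB (by omega)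
        · rw [if_neg hC2'] at hdp2
          have test : wt p n ≤ 0 + (2 * k / p ^ 2 + 1) + wt p m := by omega
          exact combine 0 (2 * k / p ^ 2 + 1) (one_dvd _) hB test
      · have hyq0 : 2 * k / p ^ 2 = 0 := Nat.eq_zero_of_not_pos ht
        by_cases hC2' : p ^ 2 ≤ x % p ^ 2 + 2 * k % p ^ 2
        · rw [if_pos hC2'] at hdp2 hK
          by_cases hk3 : 3 * w ≤ k
          · exact combine 0 2 (one_dvd _) (pi3_dvd_one hp h4w hp3 hk3) (by omega)
          · have hylt : 2 * k < 2 * p := by omega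
            have hydiv : 2 * k / p ≤ 1 :=
              Nat.lt_succ_iff.mp ((Nat.div_lt_iff_lt_mul hp.pos).mpr (by omega))
            by_cases hC1' : p ≤ x % p + 2 * k % p
            · rw [if_pos hC1'] at hK
              exact combine (1 + 1) 0 hK (one_dvd _) (by omega)
            · rw [if_neg hC1'] at hdp hK
              have hzdiv : p ≤ (x + 2 * k) / p :=
                (Nat.le_div_iff_mul_le hp.pos).mpr (by omega)
              have hxdiv : x / p < p :=
                (Nat.div_lt_iff_lt_mul hp.pos).mpr (by omega)
              have hxdp : x / p = p - 1 := by omega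
              have hpar : (p - 1) % 2 = 0 := by omega
              have hE : (p * (p - 1)) % 2 = 0 := by
                rw [Nat.mul_mod, hpar, mul_zero]
                omega
              rw [hxdp] at hxdm
              have hxmod : x % p < p - 1 := by omega
              have hwm1 : wt p m = 1 := by
                rw [hwtm, if_pos hx2, if_pos (by omega)]
              exact combine (0 + 1) 0 hK (one_dvd _) (by omega)
        · rw [if_neg hC2'] at hdp2
          omega
    · have hwm : wt p m = x / p ^ 2 + 1 := by rw [hwtm, if_neg hx2]
      by_cases hC2' : p ^ 2 ≤ x % p ^ 2 + 2 * k % p ^ 2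
      · rw [if_pos hC2'] at hdp2 hK
        have hK1 : (p : ℤ) ^ 1 ∣ ((x + 2 * k).choose x : ℤ) :=
          (pow_dvd_pow _ (Nat.le_add_left 1 _)).trans hK
        by_cases ht : 1 ≤ 2 * k / p ^ 2
        · exact combine 1 (2 * k / p ^ 2 + 1) hK1 (pi3_dvd_t hp h4w hp3 ht) (by omega)
        · exact combine 1 0 hK1 (one_dvd _) (by omega)
      · rw [if_neg hC2'] at hdp2
        by_cases ht : 1 ≤ 2 * k / p ^ 2
        · exact combine 0 (2 * k / p ^ 2 + 1) (one_dvd _) (pi3_dvd_t hp h4w hp3 ht) (by omega)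
        · exact combine 0 0 (one_dvd _) (one_dvd _) (by omega)


lemma wt_zero {p : ℕ} (hp3 : 3 ≤ p) : wt p 0 = 0 := by
  have h1 : 2 * 0 + 1 < p ^ 2 := by nlinarith
  have e1 : (2 * 0 + 1) % p = 1 := Nat.mod_eq_of_lt (by omega)
  have e2 : (2 * 0 + 1) / p = 0 := Nat.div_eq_of_lt (by omega)
  rw [wt, if_pos h1, e1, e2, if_neg (by omega)]

lemma main_dvd {p w : ℕ} (hp : p.Prime) (h4w : 4 * w = p + 1) (hp3 : 3 ≤ p)
    (u : ℕ → ℤ) (hu0 : u 0 = 1)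
    (hu : ∀ n : ℕ, 1 ≤ n →
      u n = Pi1 n - ∑ m ∈ Finset.range n,
        ((2 * n + 1).choose (2 * m + 1) : ℤ) * Pi3 (n - m) * u m) :
    ∀ n : ℕ, (p : ℤ) ^ (wt p n) ∣ u n := by
  intro n
  induction n using Nat.strong_induction_on with
  | _ n ih =>
    rcases Nat.eq_zero_or_pos n with rfl | hn
    · rw [hu0, wt_zero hp3, pow_zero]
    · rw [hu n hn]
      refine dvd_sub (pi1_dvd hp h4w hp3) (Finset.dvd_sum ?_)
      intro m hm
      exact wt_step hp h4w hp3 (Finset.mem_range.mp hm) (ih m (Finset.mem_range.mp hm))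

theorem romik_u_vanishes_mod_p_pow
    (p : ℕ) (hp : p.Prime) (hp3 : p % 4 = 3) (e : ℕ) (he : 2 ≤ e)
    (u : ℕ → ℤ)
    (hu0 : u 0 = 1)
    (hu : ∀ n : ℕ, 1 ≤ n →
      u n = Pi1 n - ∑ m ∈ Finset.range n,
        ((2 * n + 1).choose (2 * m + 1) : ℤ) * Pi3 (n - m) * u m) :
    ∀ n : ℕ, (e - 1) * p ^ 2 / 2 ≤ n → (p : ℤ) ^ e ∣ u n := by
  intro n hn
  have hp3' : 3 ≤ p := by omega
  set w := p / 4 + 1 with hw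
  have h4w : 4 * w = p + 1 := by omega
  have hp2pos : 0 < p ^ 2 := by positivity
  have h1 : (e - 1) * p ^ 2 ≤ 2 * n + 1 := by omega
  have h2 : p ^ 2 ≤ 2 * n + 1 := by
    calc p ^ 2 = 1 * p ^ 2 := (one_mul _).symm
      _ ≤ (e - 1) * p ^ 2 := Nat.mul_le_mul_right _ (by omega)
      _ ≤ 2 * n + 1 := h1
  have h3 : e ≤ wt p n := by
    have hdiv : e - 1 ≤ (2 * n + 1) / p ^ 2 :=
      (Nat.le_div_iff_mul_le hp2pos).mpr h1
    rw [wt, if_neg (by omega)]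
    omega
  exact dvd_trans (pow_dvd_pow _ h3) (main_dvd hp h4w hp3' u hu0 hu n)
end

section
/- Let p be a prime number with p ≡ 1 (mod 4). Then: (1) for every positive integer e, p^e divides u(n) for all integers n ≥ ⌈ep/2⌉; (2) p does not divide u((p−1)/2), and u((p−1)/2) is a quadratic residue modulo p, i.e., there exists an integer x with u((p−1)/2) ≡ x² (mod p). -/
open PowerSeries Finset Nat

def P3n (m : ℕ) : ℕ := ∏ j ∈ Finset.Icc 1 m, (4*j - 3)

lemma P3n_pos (m : ℕ) : 0 < P3n m := by
  apply Finset.prod_pos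
  intro j hj
  have := (Finset.mem_Icc.mp hj).1
  omega

lemma count_ge (P m : ℕ) (hP5 : 5 ≤ P) (hP4 : P % 4 = 1) :
    2*m / P ≤ 2 * ((Finset.Icc 1 m).filter (fun j => P ∣ 4*j - 3)).card := by
  have hQle : (2*m/P)*P ≤ 2*m := Nat.div_mul_le_self _ _
  set c := (P+3)/4 with hcdef
  have hc : 4*c = P+3 := by omega
  set q := (2*m/P + 1)/2 with hqdef
  have hinj : ∀ t ∈ Finset.range q, c + t*P ∈ (Finset.Icc 1 m).filter (fun j => P ∣ 4*j - 3) := by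
    intro t ht
    have ht' : t < q := Finset.mem_range.mp ht
    have h2t : 2*t + 1 ≤ 2*m/P := by omega
    have hmul : (2*t+1)*P ≤ (2*m/P)*P := Nat.mul_le_mul_right P h2t
    have hexp : (2*t+1)*P = 2*(t*P) + P := by ring
    have hA : 2*(t*P) + P ≤ 2*m := by omega
    have hup : c + t*P ≤ m := by omega
    refine Finset.mem_filter.mpr ⟨Finset.mem_Icc.mpr ⟨by omega, hup⟩, ?_⟩
    refine ⟨1 + 4*t, ?_⟩
    have hexp2 : P*(1+4*t) = P + 4*(t*P) := by ring
    omega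
  have hcard : q ≤ ((Finset.Icc 1 m).filter (fun j => P ∣ 4*j - 3)).card := by
    rw [← Finset.card_range q]
    apply Finset.card_le_card_of_injOn (fun t => c + t*P) hinj
    intro t1 _ t2 _ h
    simp only at h
    have h2 : t1 * P = t2 * P := by omega
    exact Nat.eq_of_mul_eq_mul_right (by omega) h2
  omega

lemma vp_ge_card {p : ℕ} [Fact p.Prime] (x b : ℕ) (hx : x ≠ 0) :
    ((Finset.Ico 1 b).filter (fun i => p^i ∣ x)).card ≤ padicValNat p x := by
  have hsub : ((Finset.Ico 1 b).filter (fun i => p^i ∣ x)) ⊆ Finset.Icc 1 (padicValNat p x) := by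
    intro i hi
    obtain ⟨hmem, hdvd⟩ := Finset.mem_filter.mp hi
    have h1 := (Finset.mem_Ico.mp hmem).1
    exact Finset.mem_Icc.mpr ⟨h1, (padicValNat_dvd_iff_le hx).mp hdvd⟩
  calc _ ≤ (Finset.Icc 1 (padicValNat p x)).card := Finset.card_le_card hsub
    _ = padicValNat p x := by rw [Nat.card_Icc]; omega

lemma vp_P3n {p : ℕ} [Fact p.Prime] (m : ℕ) :
    padicValNat p (P3n m) = ∑ j ∈ Finset.Icc 1 m, padicValNat p (4*j - 3) := by
  induction m with
  | zero => simp [P3n, padicValNat.one]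
  | succ m ih =>
    have h1 : P3n (m+1) = P3n m * (4*(m+1) - 3) := Finset.prod_Icc_succ_top (by omega) _
    rw [h1, padicValNat.mul (P3n_pos m).ne' (by omega), ih,
      Finset.sum_Icc_succ_top (by omega)]

lemma lemA {p : ℕ} (hp : p.Prime) (hp4 : p % 4 = 1) (m : ℕ) :
    padicValNat p ((2*m)!) ≤ 2 * padicValNat p (P3n m) := by
  haveI : Fact p.Prime := ⟨hp⟩
  have hp2 := hp.two_le
  have hp5 : 5 ≤ p := by omega
  set b := Nat.log p (2*m) + 1 with hbdef
  rw [padicValNat_factorial (lt_add_one _)]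
  have hpow : ∀ i, 1 ≤ i → 5 ≤ p^i ∧ p^i % 4 = 1 := by
    intro i hi
    constructor
    · calc 5 ≤ p^1 := by simpa using hp5
        _ ≤ p^i := Nat.pow_le_pow_right (by omega) hi
    · rw [Nat.pow_mod, hp4, Nat.one_pow]
  calc ∑ i ∈ Finset.Ico 1 b, 2*m / p^i
      ≤ ∑ i ∈ Finset.Ico 1 b, 2 * ((Finset.Icc 1 m).filter (fun j => p^i ∣ 4*j - 3)).card := by
        refine Finset.sum_le_sum fun i hi => ?_
        have h1 := (Finset.mem_Ico.mp hi).1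
        exact count_ge (p^i) m (hpow i h1).1 (hpow i h1).2
    _ = 2 * ∑ i ∈ Finset.Ico 1 b, ((Finset.Icc 1 m).filter (fun j => p^i ∣ 4*j - 3)).card := by
        rw [Finset.mul_sum]
    _ ≤ 2 * padicValNat p (P3n m) := by
        gcongr
        rw [vp_P3n]
        calc ∑ i ∈ Finset.Ico 1 b, ((Finset.Icc 1 m).filter (fun j => p^i ∣ 4*j - 3)).card
            = ∑ i ∈ Finset.Ico 1 b, ∑ j ∈ Finset.Icc 1 m, (if p^i ∣ 4*j - 3 then 1 else 0) := by
              refine Finset.sum_congr rfl fun i _ => ?_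
              rw [Finset.card_filter]
          _ = ∑ j ∈ Finset.Icc 1 m, ∑ i ∈ Finset.Ico 1 b, (if p^i ∣ 4*j - 3 then 1 else 0) :=
              Finset.sum_comm
          _ = ∑ j ∈ Finset.Icc 1 m, ((Finset.Ico 1 b).filter (fun i => p^i ∣ 4*j - 3)).card := by
              refine Finset.sum_congr rfl fun j _ => ?_
              rw [Finset.card_filter]
          _ ≤ ∑ j ∈ Finset.Icc 1 m, padicValNat p (4*j - 3) := by
              refine Finset.sum_le_sum fun j hj => ?_
              have h1 := (Finset.mem_Icc.mp hj).1
              exact vp_ge_card _ b (by omega)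


noncomputable section

def Econv (A B : ℕ → ℤ) (n : ℕ) : ℤ :=
  ∑ i ∈ Finset.range (n+1), (n.choose i : ℤ) * A i * B (n - i)

def Eser (A : ℕ → ℤ) : PowerSeries ℚ := PowerSeries.mk fun k => (A k : ℚ) / (Nat.factorial k)

@[simp] lemma coeff_Eser (A : ℕ → ℤ) (k : ℕ) :
    (PowerSeries.coeff k) (Eser A) = (A k : ℚ) / (Nat.factorial k) := coeff_mk k _

@[simp] lemma constCoeff_Eser (A : ℕ → ℤ) :
    (PowerSeries.constantCoeff) (Eser A) = (A 0 : ℚ) := by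
  rw [← PowerSeries.coeff_zero_eq_constantCoeff, coeff_Eser]
  simp

lemma Eser_mul (A B : ℕ → ℤ) : Eser A * Eser B = Eser (Econv A B) := by
  ext n
  rw [coeff_mul, coeff_Eser]
  rw [Finset.Nat.sum_antidiagonal_eq_sum_range_succ_mk]
  rw [Econv]
  push_cast
  rw [Finset.sum_div]
  refine Finset.sum_congr rfl fun i hi => ?_
  have hin : i ≤ n := by simpa using Nat.lt_succ_iff.mp (Finset.mem_range.mp hi)
  rw [coeff_Eser, coeff_Eser, Nat.cast_choose ℚ hin]
  have h1 : ((Nat.factorial i) : ℚ) ≠ 0 := by positivity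
  have h2 : ((Nat.factorial (n-i)) : ℚ) ≠ 0 := by positivity
  have h3 : ((Nat.factorial n) : ℚ) ≠ 0 := by positivity
  field_simp

lemma Eser_eq_iff (A B : ℕ → ℤ) : Eser A = Eser B ↔ ∀ k, A k = B k := by
  constructor
  · intro h k
    have h2 := congrArg (PowerSeries.coeff k) h
    rw [coeff_Eser, coeff_Eser] at h2
    have h1 : ((Nat.factorial k) : ℚ) ≠ 0 := by positivity
    have h3 : (A k : ℚ) = B k := by
      field_simp at h2; exact_mod_cast h2
    exact_mod_cast h3
  · intro h
    have : A = B := funext h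
    rw [this]

lemma Eser_one : Eser (fun n => if n = 0 then 1 else 0) = 1 := by
  ext n
  simp only [coeff_Eser, PowerSeries.coeff_one]
  by_cases h : n = 0 <;> simp [h]

lemma Eser_D (A : ℕ → ℤ) : d⁄dX ℚ (Eser A) = Eser (fun k => A (k+1)) := by
  ext n
  rw [PowerSeries.coeff_derivative]
  simp only [coeff_Eser]
  rw [Nat.factorial_succ]
  push_cast
  have h1 : ((Nat.factorial n) : ℚ) ≠ 0 := by positivity
  field_simp

lemma Eser_X_mul (A : ℕ → ℤ) : (X : PowerSeries ℚ) * Eser A = Eser (fun k => k * A (k-1)) := by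
  ext n
  cases n with
  | zero => simp
  | succ m =>
    rw [PowerSeries.coeff_succ_X_mul]
    simp only [coeff_Eser]
    rw [Nat.factorial_succ]
    push_cast
    have h1 : ((Nat.factorial m) : ℚ) ≠ 0 := by positivity
    field_simp

lemma Eser_C_mul (c : ℤ) (A : ℕ → ℤ) :
    (C (c : ℚ)) * Eser A = Eser (fun k => c * A k) := by
  ext n
  rw [PowerSeries.coeff_C_mul]
  simp only [coeff_Eser]
  push_cast
  ring

lemma Eser_sub (A B : ℕ → ℤ) : Eser A - Eser B = Eser (fun k => A k - B k) := by
  ext n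
  simp only [map_sub, coeff_Eser]
  push_cast
  ring

lemma Eser_add (A B : ℕ → ℤ) : Eser A + Eser B = Eser (fun k => A k + B k) := by
  ext n
  simp only [map_add, coeff_Eser]
  push_cast
  ring

/-- sum over a range of a function supported on even integers -/
lemma sum_even_support (G : ℕ → ℤ) (h : ∀ i, i % 2 = 1 → G i = 0) (M : ℕ) :
    ∑ i ∈ Finset.range M, G i = ∑ m ∈ Finset.range ((M+1)/2), G (2*m) := by
  induction M with
  | zero => simp
  | succ M ih =>
    rw [Finset.sum_range_succ, ih]
    rcases Nat.even_or_odd M with hM | hM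
    · obtain ⟨t, rfl⟩ := hM
      have h1 : (t+t+1+1)/2 = t+1 := by omega
      have h2 : (t+t+1)/2 = t := by omega
      rw [h1, h2, Finset.sum_range_succ]
      congr 2
      omega
    · have h0 : G M = 0 := h M (Nat.odd_iff.mp hM)
      have hM2 : M % 2 = 1 := Nat.odd_iff.mp hM
      have h1 : (M+1+1)/2 = (M+1)/2 := by omega
      rw [h0, h1, add_zero]

def aS : ℕ → ℤ := fun k => if k % 2 = 0 then Pi3 (k/2) else 0
def bS : ℕ → ℤ := fun k => if k % 2 = 1 then Pi1 (k/2) else 0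

lemma Pi3_succ (n : ℕ) : Pi3 (n+1) = (4*(n:ℤ)+1)^2 * Pi3 n := by
  rw [Pi3, Pi3, Finset.prod_Icc_succ_top (by omega)]
  push_cast
  ring

lemma Pi1_succ (n : ℕ) : Pi1 (n+1) = (4*(n:ℤ)+3)^2 * Pi1 n := by
  rw [Pi1, Pi1, Finset.prod_Icc_succ_top (by omega)]
  push_cast
  ring

lemma aS_rec (k : ℕ) : aS (k+2) = 4*((k:ℤ) * (((k-1 : ℕ):ℤ) * aS ((k-1-1)+2))) +
    8*((k:ℤ) * aS ((k-1)+1)) + aS k := by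
  rcases k with _ | _ | j
  · simp [aS, show (2:ℕ)/2 = 1 from rfl, Pi3_succ, Pi3]
  · simp [aS]
  · have h1 : j + 2 - 1 - 1 + 2 = j + 2 := by omega
    have h2 : j + 2 - 1 + 1 = j + 2 := by omega
    rw [h1, h2]
    rcases Nat.even_or_odd j with hj | hj
    · obtain ⟨t, rfl⟩ := hj
      have e1 : (t+t+2+2) % 2 = 0 := by omega
      have e2 : (t+t+2) % 2 = 0 := by omega
      have e3 : (t+t+2+2)/2 = t+2 := by omega
      have e4 : (t+t+2)/2 = t+1 := by omega
      simp only [aS, e1, e2, e3, e4, if_true]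
      rw [Pi3_succ (t+1)]
      push_cast
      ring
    · obtain ⟨t, rfl⟩ := hj
      have e1 : (2*t+1+2+2) % 2 = 1 := by omega
      have e2 : (2*t+1+2) % 2 = 1 := by omega
      simp only [aS, e1, e2]
      norm_num

lemma bS_rec (k : ℕ) : bS (k+2) = 4*((k:ℤ) * (((k-1 : ℕ):ℤ) * bS ((k-1-1)+2))) +
    8*((k:ℤ) * bS ((k-1)+1)) + bS k := by
  rcases k with _ | _ | j
  · simp [bS]
  · have e4 : Pi1 1 = 9 := by simp [Pi1]
    have e5 : Pi1 0 = 1 := by simp [Pi1]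
    norm_num [bS, e4, e5]
  · have h1 : j + 2 - 1 - 1 + 2 = j + 2 := by omega
    have h2 : j + 2 - 1 + 1 = j + 2 := by omega
    rw [h1, h2]
    rcases Nat.even_or_odd j with hj | hj
    · obtain ⟨t, rfl⟩ := hj
      have e1 : (t+t+2+2) % 2 = 0 := by omega
      have e2 : (t+t+2) % 2 = 0 := by omega
      simp only [bS, e1, e2]
      norm_num
    · obtain ⟨t, rfl⟩ := hj
      have e1 : (2*t+1+2+2) % 2 = 1 := by omega
      have e2 : (2*t+1+2) % 2 = 1 := by omega
      have e3 : (2*t+1+2+2)/2 = t+2 := by omega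
      have e4 : (2*t+1+2)/2 = t+1 := by omega
      simp only [bS, e1, e2, e3, e4, if_true]
      rw [Pi1_succ (t+1)]
      push_cast
      ring

lemma Eser_four_mul (A : ℕ → ℤ) : (4 : PowerSeries ℚ) * Eser A = Eser (fun k => 4 * A k) := by
  have h : (4 : PowerSeries ℚ) = C ((4:ℤ):ℚ) := by
    have h2 : ((4:ℤ):ℚ) = (4:ℚ) := by norm_num
    rw [h2, map_ofNat]
  rw [h, Eser_C_mul]

lemma Eser_eight_mul (A : ℕ → ℤ) : (8 : PowerSeries ℚ) * Eser A = Eser (fun k => 8 * A k) := by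
  have h : (8 : PowerSeries ℚ) = C ((8:ℤ):ℚ) := by
    have h2 : ((8:ℤ):ℚ) = (8:ℚ) := by norm_num
    rw [h2, map_ofNat]
  rw [h, Eser_C_mul]

lemma deriv_four : d⁄dX ℚ (4 : PowerSeries ℚ) = 0 := by
  rw [show (4:PowerSeries ℚ) = C (4:ℚ) from (map_ofNat _ _).symm, derivative_C]

/-- The ODE in power-series form for an `Eser` sequence satisfying the recurrence. -/
lemma ode_of_rec (A : ℕ → ℤ)
    (hrec : ∀ k, A (k+2) = 4*((k:ℤ) * (((k-1 : ℕ):ℤ) * A ((k-1-1)+2))) +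
      8*((k:ℤ) * A ((k-1)+1)) + A k) :
    d⁄dX ℚ (d⁄dX ℚ (Eser A)) =
      (4 : PowerSeries ℚ) * (X * (X * d⁄dX ℚ (d⁄dX ℚ (Eser A)))) +
      (8 : PowerSeries ℚ) * (X * d⁄dX ℚ (Eser A)) + Eser A := by
  rw [Eser_D, Eser_D]
  rw [Eser_X_mul, Eser_X_mul, Eser_X_mul]
  rw [Eser_four_mul, Eser_eight_mul, Eser_add, Eser_add]
  rw [Eser_eq_iff]
  intro k
  simpa using hrec k

lemma wronskian_eq_one (F G : PowerSeries ℚ)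
    (hF : d⁄dX ℚ (d⁄dX ℚ F) = (4:PowerSeries ℚ) * (X*(X*d⁄dX ℚ (d⁄dX ℚ F))) + (8:PowerSeries ℚ) * (X * d⁄dX ℚ F) + F)
    (hG : d⁄dX ℚ (d⁄dX ℚ G) = (4:PowerSeries ℚ) * (X*(X*d⁄dX ℚ (d⁄dX ℚ G))) + (8:PowerSeries ℚ) * (X * d⁄dX ℚ G) + G)
    (hcF : constantCoeff F = 1) (hcG : constantCoeff G = 0)
    (hcF1 : constantCoeff (d⁄dX ℚ F) = 0) (hcG1 : constantCoeff (d⁄dX ℚ G) = 1) :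
    (1 - (4:PowerSeries ℚ) * (X*X)) * (F * d⁄dX ℚ G - G * d⁄dX ℚ F) = 1 := by
  apply PowerSeries.derivative.ext
  · simp only [Derivation.leibniz, smul_eq_mul, map_sub, derivative_X, Derivation.map_one_eq_zero,
      deriv_four, map_ofNat, mul_one, mul_zero, zero_mul, add_zero, zero_add, sub_zero, zero_sub]
    linear_combination F * hG - G * hF
  · simp only [map_mul, map_sub, map_one, hcF, hcG, hcF1, hcG1, constantCoeff_X, map_ofNat]
    norm_num

lemma key_series (F G U : PowerSeries ℚ) (hGU : G = F * U)
    (hW : (1 - (4:PowerSeries ℚ) * (X*X)) * (F * d⁄dX ℚ G - G * d⁄dX ℚ F) = 1) :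
    (1 - (4:PowerSeries ℚ) * (X*X)) * (F * F * d⁄dX ℚ U) = 1 := by
  have hD : d⁄dX ℚ G = F * d⁄dX ℚ U + U * d⁄dX ℚ F := by
    rw [hGU, Derivation.leibniz, smul_eq_mul, smul_eq_mul]
  rw [hD, hGU] at hW
  linear_combination hW

def wS (u : ℕ → ℤ) : ℕ → ℤ := fun k => if k % 2 = 1 then u (k/2) else 0
def duS (u : ℕ → ℤ) : ℕ → ℤ := fun k => if k % 2 = 0 then u (k/2) else 0
def hSq : ℕ → ℤ := Econv aS aS
def gS : ℕ → ℤ := fun k => hSq k - 4*((k:ℤ) * (((k-1:ℕ):ℤ) * hSq (k-1-1)))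

lemma hPsi_lemma (u : ℕ → ℤ) (hu0 : u 0 = 1)
    (hu : ∀ n : ℕ, 1 ≤ n →
      u n = Pi1 n - ∑ m ∈ Finset.range n,
        ((2 * n + 1).choose (2 * m + 1) : ℤ) * Pi3 (n - m) * u m) :
    Eser bS = Eser aS * Eser (wS u) := by
  rw [Eser_mul]
  apply (Eser_eq_iff _ _).mpr
  intro n
  rcases Nat.even_or_odd n with hn | hn
  · have hn2 : n % 2 = 0 := Nat.even_iff.mp hn
    have h1 : bS n = 0 := by simp [bS, hn2]
    rw [h1, Econv]
    refine (Finset.sum_eq_zero fun i hi => ?_).symm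
    have hile : i ≤ n := Nat.lt_succ_iff.mp (Finset.mem_range.mp hi)
    rcases Nat.even_or_odd i with hi2 | hi2
    · have hi3 : i % 2 = 0 := Nat.even_iff.mp hi2
      have hni : (n - i) % 2 = 0 := by omega
      have hz : wS u (n - i) = 0 := by simp [wS, hni]
      rw [hz, mul_zero]
    · have hz : aS i = 0 := by simp [aS, Nat.odd_iff.mp hi2]
      rw [hz, mul_zero, zero_mul]
  · obtain ⟨N, rfl⟩ := hn
    have hb : bS (2*N+1) = Pi1 N := by
      have h1 : (2*N+1) % 2 = 1 := by omega
      have h2 : (2*N+1) / 2 = N := by omega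
      simp [bS, h1, h2]
    rw [hb, Econv]
    have hrange : 2*N+1+1 = 2*N+2 := by omega
    rw [hrange]
    rw [sum_even_support _ (fun i hi => by
      have hz : aS i = 0 := by simp [aS, hi]
      rw [hz, mul_zero, zero_mul])]
    have hhalf : (2*N+2+1)/2 = N+1 := by omega
    rw [hhalf]
    have hterm : ∀ m ∈ Finset.range (N+1),
        ((2*N+1).choose (2*m) : ℤ) * aS (2*m) * wS u (2*N+1 - 2*m)
          = ((2*N+1).choose (2*m) : ℤ) * Pi3 m * u (N - m) := by
      intro m hm
      have hmN : m ≤ N := Nat.lt_succ_iff.mp (Finset.mem_range.mp hm)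
      have ha : aS (2*m) = Pi3 m := by
        have h1 : (2*m) % 2 = 0 := by omega
        have h2 : (2*m)/2 = m := by omega
        simp [aS, h1, h2]
      have hw : wS u (2*N+1-2*m) = u (N - m) := by
        have h1 : (2*N+1-2*m) % 2 = 1 := by omega
        have h2 : (2*N+1-2*m)/2 = N - m := by omega
        simp [wS, h1, h2]
      rw [ha, hw]
    rw [Finset.sum_congr rfl hterm]
    have hrefl := Finset.sum_range_reflect
      (fun m => ((2*N+1).choose (2*m) : ℤ) * Pi3 m * u (N - m)) (N+1)
    rw [← hrefl]
    have hterm2 : ∀ m ∈ Finset.range (N+1),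
        ((2*N+1).choose (2*(N+1-1-m)) : ℤ) * Pi3 (N+1-1-m) * u (N - (N+1-1-m))
          = ((2*N+1).choose (2*m+1) : ℤ) * Pi3 (N-m) * u m := by
      intro m hm
      have hmN : m ≤ N := Nat.lt_succ_iff.mp (Finset.mem_range.mp hm)
      have h1 : N+1-1-m = N-m := by omega
      have h2 : N - (N-m) = m := by omega
      rw [h1, h2]
      have h3 : 2*(N-m) = 2*N+1 - (2*m+1) := by omega
      rw [h3, Nat.choose_symm (by omega)]
    rw [Finset.sum_congr rfl hterm2]
    rw [Finset.sum_range_succ]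
    have hlast : ((2*N+1).choose (2*N+1) : ℤ) * Pi3 (N-N) * u N = u N := by
      rw [Nat.choose_self]
      have hNN : N - N = 0 := by omega
      rw [hNN]
      have hP30 : Pi3 0 = 1 := by simp [Pi3]
      rw [hP30]
      ring
    rw [hlast]
    rcases Nat.eq_zero_or_pos N with rfl | hN
    · simp [hu0, Pi1]
    · rw [hu N hN]
      ring

lemma main_conv (u : ℕ → ℤ) (hu0 : u 0 = 1)
    (hu : ∀ n : ℕ, 1 ≤ n →
      u n = Pi1 n - ∑ m ∈ Finset.range n,
        ((2 * n + 1).choose (2 * m + 1) : ℤ) * Pi3 (n - m) * u m) :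
    ∀ n, Econv gS (duS u) n = (if n = 0 then 1 else 0) := by
  have hPsi := hPsi_lemma u hu0 hu
  have hcF : constantCoeff (Eser aS) = 1 := by
    rw [constCoeff_Eser]
    simp [aS, Pi3]
  have hcG : constantCoeff (Eser bS) = 0 := by
    rw [constCoeff_Eser]
    simp [bS]
  have hcF1 : constantCoeff (d⁄dX ℚ (Eser aS)) = 0 := by
    rw [Eser_D, constCoeff_Eser]
    simp [aS]
  have hcG1 : constantCoeff (d⁄dX ℚ (Eser bS)) = 1 := by
    rw [Eser_D, constCoeff_Eser]
    simp [bS, Pi1]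
  have hW := wronskian_eq_one (Eser aS) (Eser bS)
    (ode_of_rec aS aS_rec) (ode_of_rec bS bS_rec) hcF hcG hcF1 hcG1
  have hkey := key_series (Eser aS) (Eser bS) (Eser (wS u)) hPsi hW
  have hDw : d⁄dX ℚ (Eser (wS u)) = Eser (duS u) := by
    rw [Eser_D]
    apply (Eser_eq_iff _ _).mpr
    intro k
    rcases Nat.even_or_odd k with hk | hk
    · have h3 : k % 2 = 0 := Nat.even_iff.mp hk
      have h1 : (k+1) % 2 = 1 := by omega
      have h2 : (k+1)/2 = k/2 := by omega
      simp [wS, duS, h1, h2, h3]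
    · have h3 : k % 2 = 1 := Nat.odd_iff.mp hk
      have h1 : (k+1) % 2 = 0 := by omega
      simp [wS, duS, h1, h3]
  rw [hDw] at hkey
  have h2 : (1 - (4:PowerSeries ℚ)*(X*X)) * (Eser aS * Eser aS * Eser (duS u)) =
      Eser (Econv gS (duS u)) := by
    have hH : Eser aS * Eser aS = Eser hSq := Eser_mul _ _
    have step1 : (1 - (4:PowerSeries ℚ)*(X*X)) * (Eser aS * Eser aS * Eser (duS u)) =
        (Eser hSq - (4:PowerSeries ℚ) * (X * (X * Eser hSq))) * Eser (duS u) := by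
      rw [hH]; ring
    rw [step1, Eser_X_mul hSq, Eser_X_mul, Eser_four_mul, Eser_sub, Eser_mul]
    rfl
  rw [h2, ← Eser_one] at hkey
  exact (Eser_eq_iff _ _).mp hkey


-- ## Divisibility lemmas

lemma Pi3_eq_sq (m : ℕ) : Pi3 m = ((P3n m : ℤ))^2 := by
  rw [Pi3, P3n, Nat.cast_prod, ← Finset.prod_pow]
  refine Finset.prod_congr rfl fun j hj => ?_
  have h1 : 1 ≤ j := (Finset.mem_Icc.mp hj).1
  have h2 : ((4*j-3 : ℕ) : ℤ) = 4*(j:ℤ)-3 := by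
    have h3 : (3:ℕ) ≤ 4*j := by omega
    push_cast [h3]
    ring
  rw [h2]

lemma lemA' {p : ℕ} (hp : p.Prime) (hp4 : p % 4 = 1) (m : ℕ) :
    (p:ℤ)^(padicValNat p (Nat.factorial (2*m))) ∣ Pi3 m := by
  haveI : Fact p.Prime := ⟨hp⟩
  have h1 : (p:ℕ)^(padicValNat p (Nat.factorial (2*m))) ∣ (P3n m)^2 := by
    calc (p:ℕ)^(padicValNat p (Nat.factorial (2*m)))
        ∣ (p:ℕ)^(2 * padicValNat p (P3n m)) := pow_dvd_pow p (lemA hp hp4 m)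
      _ = ((p:ℕ)^(padicValNat p (P3n m)))^2 := by rw [← pow_mul, mul_comm]
      _ ∣ (P3n m)^2 := pow_dvd_pow_of_dvd pow_padicValNat_dvd 2
  rw [Pi3_eq_sq]
  exact_mod_cast Int.natCast_dvd_natCast.mpr h1

lemma vp_aS {p : ℕ} (hp : p.Prime) (hp4 : p % 4 = 1) (k : ℕ) :
    (p:ℤ)^(padicValNat p (Nat.factorial k)) ∣ aS k := by
  rcases Nat.even_or_odd k with hk | hk
  · obtain ⟨m, rfl⟩ := hk
    have h1 : aS (m + m) = Pi3 m := by
      have e1 : (m+m) % 2 = 0 := by omega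
      have e2 : (m+m)/2 = m := by omega
      simp [aS, e1, e2]
    rw [h1]
    have h2 : m + m = 2*m := by omega
    rw [h2]
    exact lemA' hp hp4 m
  · have h1 : aS k = 0 := by simp [aS, Nat.odd_iff.mp hk]
    rw [h1]
    exact dvd_zero _

lemma choose_split {p : ℕ} (hp : p.Prime) {n i : ℕ} (hin : i ≤ n) (A B : ℤ)
    (hA : (p:ℤ)^(padicValNat p (Nat.factorial i)) ∣ A)
    (hB : (p:ℤ)^(padicValNat p (Nat.factorial (n-i))) ∣ B) :
    (p:ℤ)^(padicValNat p (Nat.factorial n)) ∣ (n.choose i : ℤ) * A * B := by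
  haveI : Fact p.Prime := ⟨hp⟩
  have hfact := Nat.choose_mul_factorial_mul_factorial hin
  have hc0 : n.choose i ≠ 0 := (Nat.choose_pos hin).ne'
  have hval : padicValNat p (Nat.factorial n) =
      padicValNat p (n.choose i) + padicValNat p (Nat.factorial i)
        + padicValNat p (Nat.factorial (n-i)) := by
    rw [← hfact, padicValNat.mul (by positivity) (Nat.factorial_ne_zero _),
      padicValNat.mul hc0 (Nat.factorial_ne_zero _)]
  rw [hval, pow_add, pow_add]
  have hch : (p:ℤ)^(padicValNat p (n.choose i)) ∣ (n.choose i : ℤ) := by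
    exact_mod_cast Int.natCast_dvd_natCast.mpr pow_padicValNat_dvd
  exact mul_dvd_mul (mul_dvd_mul hch hA) hB

lemma vp_hSq {p : ℕ} (hp : p.Prime) (hp4 : p % 4 = 1) (k : ℕ) :
    (p:ℤ)^(padicValNat p (Nat.factorial k)) ∣ hSq k := by
  rw [hSq, Econv]
  refine Finset.dvd_sum fun i hi => ?_
  have hin : i ≤ k := Nat.lt_succ_iff.mp (Finset.mem_range.mp hi)
  exact choose_split hp hin _ _ (vp_aS hp hp4 i) (vp_aS hp hp4 (k-i))

lemma vp_gS {p : ℕ} (hp : p.Prime) (hp4 : p % 4 = 1) (k : ℕ) :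
    (p:ℤ)^(padicValNat p (Nat.factorial k)) ∣ gS k := by
  haveI : Fact p.Prime := ⟨hp⟩
  rw [gS]
  refine dvd_sub (vp_hSq hp hp4 k) ?_
  rcases k with _ | _ | j
  · simp
  · norm_num
  · have hidx : j + 2 - 1 - 1 = j := by omega
    have hidx2 : j + 2 - 1 = j + 1 := by omega
    rw [hidx, hidx2]
    have hfac : Nat.factorial (j+2) = (j+2) * ((j+1) * Nat.factorial j) := by
      rw [Nat.factorial_succ, Nat.factorial_succ]
    have hval : padicValNat p (Nat.factorial (j+2)) =
        padicValNat p (j+2) + (padicValNat p (j+1) + padicValNat p (Nat.factorial j)) := by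
      rw [hfac, padicValNat.mul (by omega) (by positivity),
        padicValNat.mul (by omega) (Nat.factorial_ne_zero _)]
    rw [hval, pow_add, pow_add]
    have h1 : (p:ℤ)^(padicValNat p (j+2)) ∣ ((j+2 : ℕ):ℤ) := by
      exact_mod_cast Int.natCast_dvd_natCast.mpr pow_padicValNat_dvd
    have h2 : (p:ℤ)^(padicValNat p (j+1)) ∣ ((j+1 : ℕ):ℤ) := by
      exact_mod_cast Int.natCast_dvd_natCast.mpr pow_padicValNat_dvd
    have h3 := vp_hSq hp hp4 j
    push_cast at h1 h2 ⊢
    exact Dvd.dvd.mul_left (mul_dvd_mul h1 (mul_dvd_mul h2 h3)) 4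

lemma gS_zero : gS 0 = 1 := by
  have h : hSq 0 = 1 := by
    rw [hSq, Econv]
    simp [aS, Pi3]
  simp [gS, h]

lemma vp_duS {p : ℕ} (hp : p.Prime) (hp4 : p % 4 = 1)
    (u : ℕ → ℤ) (hu0 : u 0 = 1)
    (hu : ∀ n : ℕ, 1 ≤ n →
      u n = Pi1 n - ∑ m ∈ Finset.range n,
        ((2 * n + 1).choose (2 * m + 1) : ℤ) * Pi3 (n - m) * u m) :
    ∀ k, (p:ℤ)^(padicValNat p (Nat.factorial k)) ∣ duS u k := by
  haveI : Fact p.Prime := ⟨hp⟩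
  have hconv := main_conv u hu0 hu
  intro k
  induction k using Nat.strong_induction_on with
  | _ k IH =>
    rcases Nat.eq_zero_or_pos k with rfl | hk
    · simp [Nat.factorial, padicValNat.one]
    · have hc := hconv k
      rw [if_neg (by omega), Econv] at hc
      have h0mem : (0:ℕ) ∈ Finset.range (k+1) := Finset.mem_range.mpr (by omega)
      rw [← Finset.add_sum_erase _ _ h0mem] at hc
      have hfirst : ((k.choose 0 : ℤ)) * gS 0 * duS u (k - 0) = duS u k := by
        rw [Nat.choose_zero_right, gS_zero]
        norm_num
      rw [hfirst] at hc
      have hdu : duS u k = -∑ i ∈ (Finset.range (k+1)).erase 0,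
          ((k.choose i : ℤ)) * gS i * duS u (k - i) := by linarith [hc]
      rw [hdu]
      refine dvd_neg.mpr (Finset.dvd_sum fun i hi => ?_)
      obtain ⟨hi0, himem⟩ := Finset.mem_erase.mp hi
      have hin : i ≤ k := Nat.lt_succ_iff.mp (Finset.mem_range.mp himem)
      have hlt : k - i < k := by omega
      exact choose_split hp hin _ _ (vp_gS hp hp4 i) (IH (k-i) hlt)

theorem romik_u_mod_p_pow_one_mod_four
    (p : ℕ) (hp : p.Prime) (hp1 : p % 4 = 1)
    (u : ℕ → ℤ)
    (hu0 : u 0 = 1)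
    (hu : ∀ n : ℕ, 1 ≤ n →
      u n = Pi1 n - ∑ m ∈ Finset.range n,
        ((2 * n + 1).choose (2 * m + 1) : ℤ) * Pi3 (n - m) * u m) :
    (∀ e : ℕ, 1 ≤ e → ∀ n : ℕ, (e * p + 1) / 2 ≤ n → (p : ℤ) ^ e ∣ u n) ∧
    ¬ (p : ℤ) ∣ u ((p - 1) / 2) ∧
    ∃ x : ℤ, (p : ℤ) ∣ u ((p - 1) / 2) - x ^ 2 := by
  haveI : Fact p.Prime := ⟨hp⟩
  have hp2 := hp.two_le
  have hp5 : 5 ≤ p := by omega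
  refine ⟨?_, ?_, ?_⟩
  · -- part 1
    intro e he n hn
    have h2n : e * p ≤ 2 * n := by omega
    have hedvd : e ≤ padicValNat p (Nat.factorial (2*n)) := by
      have hb : Nat.log p (2*n) < Nat.log p (2*n) + 1 := Nat.lt_succ_self _
      rw [padicValNat_factorial hb]
      have h1 : e ≤ 2*n/p := (Nat.le_div_iff_mul_le (by omega)).mpr h2n
      have hmem : (1:ℕ) ∈ Finset.Ico 1 (Nat.log p (2*n) + 1) := by
        rw [Finset.mem_Ico]
        refine ⟨le_refl _, ?_⟩
        have hple : p ≤ e*p := Nat.le_mul_of_pos_left p (by omega)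
        have hlog : 0 < Nat.log p (2*n) := Nat.log_pos (by omega) (by omega)
        omega
      calc e ≤ 2*n/p := h1
        _ = 2*n/p^1 := by rw [pow_one]
        _ ≤ ∑ i ∈ Finset.Ico 1 (Nat.log p (2*n) + 1), 2*n/p^i :=
            Finset.single_le_sum (f := fun i => 2*n/p^i) (fun i _ => Nat.zero_le _) hmem
    have hdu : duS u (2*n) = u n := by
      have e1 : (2*n) % 2 = 0 := by omega
      have e2 : (2*n)/2 = n := by omega
      simp [duS, e1, e2]
    calc (p:ℤ)^e ∣ (p:ℤ)^(padicValNat p (Nat.factorial (2*n))) := pow_dvd_pow _ hedvd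
      _ ∣ duS u (2*n) := vp_duS hp hp1 u hu0 hu (2*n)
      _ = u n := hdu
  · -- part 2
    intro hdvd
    set n0 := (p-1)/2 with hn0
    have hn01 : 1 ≤ n0 := by omega
    have hp2n0 : 2*n0 + 1 = p := by omega
    have hrec := hu n0 hn01
    rw [hp2n0] at hrec
    have hsum : (p:ℤ) ∣ ∑ m ∈ Finset.range n0, ((p.choose (2*m+1)) : ℤ) * Pi3 (n0-m) * u m := by
      refine Finset.dvd_sum fun m hm => ?_
      have hm' : m < n0 := Finset.mem_range.mp hm
      have hchoose : p ∣ p.choose (2*m+1) :=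
        hp.dvd_choose_self (by omega) (by omega)
      exact Dvd.dvd.mul_right (Dvd.dvd.mul_right (Int.natCast_dvd_natCast.mpr hchoose) _) _
    have hPi1 : (p:ℤ) ∣ Pi1 n0 := by
      have : Pi1 n0 = u n0 + ∑ m ∈ Finset.range n0, ((p.choose (2*m+1)) : ℤ) * Pi3 (n0-m) * u m := by
        rw [hrec]; ring
      rw [this]
      exact dvd_add hdvd hsum
    -- but p does not divide Pi1 n0
    have hprime : Prime (p:ℤ) := Nat.prime_iff_prime_int.mp hp
    rw [Pi1] at hPi1
    obtain ⟨j, hjmem, hjdvd⟩ := hprime.exists_mem_finset_dvd hPi1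
    have hjd : (p:ℤ) ∣ (4*(j:ℤ) - 1) := hprime.dvd_of_dvd_pow hjdvd
    obtain ⟨hj1, hj2⟩ := Finset.mem_Icc.mp hjmem
    obtain ⟨t, ht⟩ := hjd
    have hub : 4*(j:ℤ) - 1 < 2*p := by
      have hnat : 4*j + 2 ≤ 2*p := by omega
      have hcast : 4*(j:ℤ) + 2 ≤ 2*(p:ℤ) := by exact_mod_cast hnat
      linarith
    have hlb : 0 < 4*(j:ℤ) - 1 := by
      have : (1:ℤ) ≤ (j:ℤ) := by exact_mod_cast hj1
      linarith
    have hppos : (0:ℤ) < p := by exact_mod_cast hp.pos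
    have ht1 : t = 1 := by nlinarith
    rw [ht1, mul_one] at ht
    -- 4j - 1 = p implies p ≡ 3 mod 4
    have hj4 : 4 * j = p + 1 := by
      have : 4 * (j:ℤ) = (p:ℤ) + 1 := by linarith
      exact_mod_cast this
    omega
  · -- part 3
    refine ⟨∏ j ∈ Finset.Icc 1 ((p-1)/2), (4*(j:ℤ) - 1), ?_⟩
    have hsq : (∏ j ∈ Finset.Icc 1 ((p-1)/2), (4*(j:ℤ) - 1))^2 = Pi1 ((p-1)/2) := by
      rw [Pi1, ← Finset.prod_pow]
    rw [hsq]
    set n0 := (p-1)/2 with hn0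
    have hn01 : 1 ≤ n0 := by omega
    have hp2n0 : 2*n0 + 1 = p := by omega
    have hrec := hu n0 hn01
    rw [hp2n0] at hrec
    have hsum : (p:ℤ) ∣ ∑ m ∈ Finset.range n0, ((p.choose (2*m+1)) : ℤ) * Pi3 (n0-m) * u m := by
      refine Finset.dvd_sum fun m hm => ?_
      have hm' : m < n0 := Finset.mem_range.mp hm
      have hchoose : p ∣ p.choose (2*m+1) :=
        hp.dvd_choose_self (by omega) (by omega)
      exact Dvd.dvd.mul_right (Dvd.dvd.mul_right (Int.natCast_dvd_natCast.mpr hchoose) _) _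
    have : u n0 - Pi1 n0 = -∑ m ∈ Finset.range n0, ((p.choose (2*m+1)) : ℤ) * Pi3 (n0-m) * u m := by
      rw [hrec]; ring
    rw [this]
    exact dvd_neg.mpr hsum
end
end

section
/- Let p be an odd prime number and let e ≥ 2 be an integer. Then p^e divides v(n) for all integers n ≥ ⌈(e−1)p²/2⌉. -/
open Finset

/-- If there is a carry at base-p position `i` when adding `k` and `n-k`, then `p` divides
`n.choose k`; more generally carries at a set of positions give a power of `p`. -/
lemma carry_pow_dvd_choose {p : ℕ} (hp : p.Prime) {n k : ℕ} (hkn : k ≤ n) (S : Finset ℕ)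
    (hS : S ⊆ (Finset.Ico 1 (Nat.log p n + 3)).filter
      fun i => p ^ i ≤ k % p ^ i + (n - k) % p ^ i) :
    p ^ S.card ∣ n.choose k := by
  rw [pow_dvd_iff_le_emultiplicity,
    Nat.Prime.emultiplicity_choose hp hkn (b := Nat.log p n + 3) (by omega)]
  exact_mod_cast Nat.cast_le.mpr (Finset.card_le_card hS)

lemma carry1_dvd_choose {p : ℕ} (hp : p.Prime) {n k : ℕ} (hkn : k ≤ n)
    (h1 : p ≤ k % p + (n - k) % p) : p ∣ n.choose k := by
  have h := carry_pow_dvd_choose hp hkn {1} (by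
    intro i hi
    simp only [Finset.mem_singleton] at hi
    subst hi
    simp only [Finset.mem_filter, Finset.mem_Ico]
    exact ⟨⟨le_refl 1, by omega⟩, by simpa using h1⟩)
  simpa using h

lemma carry2_dvd_choose {p : ℕ} (hp : p.Prime) {n k : ℕ} (hkn : k ≤ n)
    (h2 : p ^ 2 ≤ k % p ^ 2 + (n - k) % p ^ 2) : p ∣ n.choose k := by
  have h := carry_pow_dvd_choose hp hkn {2} (by
    intro i hi
    simp only [Finset.mem_singleton] at hi
    subst hi
    simp only [Finset.mem_filter, Finset.mem_Ico]
    exact ⟨⟨by omega, by omega⟩, h2⟩)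
  simpa using h

lemma carry12_dvd_choose {p : ℕ} (hp : p.Prime) {n k : ℕ} (hkn : k ≤ n)
    (h1 : p ≤ k % p + (n - k) % p) (h2 : p ^ 2 ≤ k % p ^ 2 + (n - k) % p ^ 2) :
    p ^ 2 ∣ n.choose k := by
  have h := carry_pow_dvd_choose hp hkn {1, 2} (by
    intro i hi
    simp only [Finset.mem_insert, Finset.mem_singleton] at hi
    rcases hi with rfl | rfl <;>
      simp only [Finset.mem_filter, Finset.mem_Ico] <;>
      refine ⟨⟨by omega, by omega⟩, by simpa using ‹_›⟩)
  have hcard : ({1, 2} : Finset ℕ).card = 2 := by decide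
  rwa [hcard] at h

lemma exists_root (p : ℕ) (hp : p.Prime) (hodd : p ≠ 2) :
    ∃ j : ℕ, 1 ≤ j ∧ j ≤ p ∧ (p : ℤ) ∣ 4 * (j : ℤ) - 3 := by
  haveI : Fact p.Prime := ⟨hp⟩
  by_cases h3 : p = 3
  · exact ⟨3, by norm_num, by omega, by subst h3; norm_num⟩
  · have hp4 : ¬ (p : ℕ) ∣ 4 := by
      intro h
      rw [show (4 : ℕ) = 2 ^ 2 by norm_num] at h
      exact hodd ((Nat.prime_dvd_prime_iff_eq hp Nat.prime_two).mp (hp.dvd_of_dvd_pow h))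
    have h4 : (4 : ZMod p) ≠ 0 := by
      have : ((4 : ℕ) : ZMod p) ≠ 0 := by
        rw [Ne, ZMod.natCast_eq_zero_iff]; exact hp4
      simpa using this
    set x : ZMod p := (3 : ZMod p) * (4 : ZMod p)⁻¹ with hx
    have hxcast : ((x.val : ℕ) : ZMod p) = x := ZMod.natCast_rightInverse x
    have h4x : (4 : ZMod p) * x = 3 := by
      rw [hx, mul_comm (3 : ZMod p), ← mul_assoc, mul_inv_cancel₀ h4, one_mul]
    refine ⟨x.val, ?_, le_of_lt (ZMod.val_lt x), ?_⟩
    · rcases Nat.eq_zero_or_pos x.val with h | h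
      · exfalso
        have hx0 : x = 0 := by
          have := hxcast
          rw [h] at this
          simpa using this.symm
        rw [hx0, mul_zero] at h4x
        have h30 : ((3 : ℕ) : ZMod p) = 0 := by exact_mod_cast h4x.symm
        rw [ZMod.natCast_eq_zero_iff] at h30
        exact h3 ((Nat.prime_dvd_prime_iff_eq hp (by norm_num)).mp h30)
      · exact h
    · rw [← ZMod.intCast_zmod_eq_zero_iff_dvd]
      push_cast
      rw [hxcast, h4x]
      ring

lemma root_dvd_Pi3 {p : ℕ} {j N : ℕ} (h1 : 1 ≤ j) (hN : j ≤ N)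
    (hdvd : (p : ℤ) ∣ 4 * (j : ℤ) - 3) : (p : ℤ) ∣ Pi3 N := by
  refine dvd_trans (dvd_trans hdvd ?_) (Finset.dvd_prod_of_mem _ (Finset.mem_Icc.mpr ⟨h1, hN⟩))
  exact dvd_pow_self _ (by norm_num)

/-- The product `Pi3 n` is divisible by `p^(2*(n/p))`. -/
lemma pow_dvd_Pi3 {p : ℕ} (hp : p.Prime) (hodd : p ≠ 2) (n : ℕ) (hn : p ≤ n) :
    (p : ℤ) ^ (2 * (n / p)) ∣ Pi3 n := by
  obtain ⟨j, hj1, hjp, hjd⟩ := exists_root p hp hodd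
  set t := n / p with ht
  have hpos : 0 < p := hp.pos
  have ht1 : 1 ≤ t := by rw [ht]; exact (Nat.one_le_div_iff hpos).mpr hn
  have htn : t * p ≤ n := by rw [ht]; exact Nat.div_mul_le_self n p
  have hsub : (Finset.range t).image (fun i => j + i * p) ⊆ Finset.Icc 1 n := by
    intro a ha
    simp only [Finset.mem_image, Finset.mem_range] at ha
    obtain ⟨i, hi, rfl⟩ := ha
    have e1 : i * p ≤ (t - 1) * p := Nat.mul_le_mul_right p (by omega)
    have e2 : (t - 1) * p = t * p - p := by rw [Nat.sub_one_mul]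
    have e3 : p ≤ t * p := by calc p = 1 * p := (one_mul p).symm
      _ ≤ t * p := Nat.mul_le_mul_right p ht1
    exact Finset.mem_Icc.mpr ⟨by omega, by omega⟩
  have hinj : ∀ a ∈ Finset.range t, ∀ b ∈ Finset.range t,
      j + a * p = j + b * p → a = b := by
    intro a _ b _ hab
    exact Nat.eq_of_mul_eq_mul_right hpos (by omega)
  have hdvd2 : ∀ i ∈ Finset.range t, ((p : ℤ) ^ 2) ∣ (4 * ((j + i * p : ℕ) : ℤ) - 3) ^ 2 := by
    intro i _
    refine pow_dvd_pow_of_dvd ?_ 2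
    push_cast
    have e : 4 * ((j : ℤ) + i * p) - 3 = (4 * (j : ℤ) - 3) + p * (4 * i) := by ring
    rw [e]
    exact dvd_add hjd ⟨4 * (i : ℤ), rfl⟩
  calc (p : ℤ) ^ (2 * (n / p)) = ∏ _i ∈ Finset.range t, (p : ℤ) ^ 2 := by
        rw [Finset.prod_const, Finset.card_range, ← pow_mul, mul_comm]
    _ ∣ ∏ i ∈ Finset.range t, (4 * ((j + i * p : ℕ) : ℤ) - 3) ^ 2 :=
        Finset.prod_dvd_prod_of_dvd _ _ hdvd2
    _ = ∏ a ∈ (Finset.range t).image (fun i => j + i * p), (4 * (a : ℤ) - 3) ^ 2 :=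
        (Finset.prod_image (f := fun a : ℕ => (4 * (a : ℤ) - 3) ^ 2) hinj).symm
    _ ∣ Pi3 n := Finset.prod_dvd_prod_of_subset _ _ _ hsub

lemma odd_prime_dvd_of_dvd_two_mul {p : ℕ} (hp : p.Prime) (hodd : p ≠ 2) {x : ℤ}
    (h : (p : ℤ) ∣ 2 * x) : (p : ℤ) ∣ x := by
  have hprime : Prime (p : ℤ) := Nat.prime_iff_prime_int.mp hp
  rcases hprime.dvd_mul.mp h with h' | h'
  · exfalso
    have h2 : (p : ℕ) ∣ 2 := by exact_mod_cast h'
    exact hodd ((Nat.prime_dvd_prime_iff_eq hp Nat.prime_two).mp h2)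
  · exact h'

lemma lemB (p : ℕ) (hp : p.Prime) (hodd : p ≠ 2) (v : ℕ → ℤ)
    (hv : ∀ n : ℕ, 1 ≤ n →
      2 * v n = 2 ^ n * Pi3 n - ∑ m ∈ Finset.Ico 1 n,
        ((2 * n).choose (2 * m) : ℤ) * v m * v (n - m))
    (m : ℕ) : 1 ≤ m → 2 * m < p ^ 2 → 2 * m % p < 2 * m / p → (p : ℤ) ∣ v m := by
  induction m using Nat.strong_induction_on with
  | _ m IH =>
  intro h1 h2 h3
  obtain ⟨c, hc⟩ := hp.odd_of_ne_two hodd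
  have hdm := Nat.div_add_mod (2 * m) p
  have hq2 : 2 ≤ 2 * m / p := by
    by_contra hq
    have h0 : 2 * m / p = 0 ∨ 2 * m / p = 1 := by omega
    rcases h0 with h0 | h0 <;> rw [h0] at hdm h3 <;> omega
  have hpm : p ≤ m := by
    have := (Nat.le_div_iff_mul_le hp.pos).mp hq2
    omega
  apply odd_prime_dvd_of_dvd_two_mul hp hodd
  rw [hv m h1]
  refine dvd_sub (Dvd.dvd.mul_left ?_ _) (Finset.dvd_sum ?_)
  · obtain ⟨j, hj1, hjp, hjd⟩ := exists_root p hp hodd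
    exact root_dvd_Pi3 hj1 (hjp.trans hpm) hjd
  · intro j hj
    rw [Finset.mem_Ico] at hj
    by_cases hcar : p ≤ (2 * j) % p + (2 * (m - j)) % p
    · have hch : p ∣ (2 * m).choose (2 * j) := by
        refine carry1_dvd_choose hp (by omega) ?_
        rwa [show 2 * m - 2 * j = 2 * (m - j) by omega]
      exact ((Int.natCast_dvd_natCast.mpr hch).mul_right _).mul_right _
    · push_neg at hcar
      have hadd : 2 * j + 2 * (m - j) = 2 * m := by omega
      have hd := Nat.add_div (a := 2 * j) (b := 2 * (m - j)) hp.pos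
      rw [hadd, if_neg (by omega)] at hd
      have hm' : 2 * m % p = (2 * j) % p + (2 * (m - j)) % p := by
        conv_lhs => rw [← hadd]
        rw [Nat.add_mod, Nat.mod_eq_of_lt (by omega)]
      have hsplit : (2 * j) % p < (2 * j) / p ∨ (2 * (m - j)) % p < (2 * (m - j)) / p := by
        omega
      rcases hsplit with h' | h'
      · exact ((IH j (by omega) (by omega) (by omega) h').mul_left _).mul_right _
      · exact (IH (m - j) (by omega) (by omega) (by omega) h').mul_left _

lemma odd_prime_pow_dvd_of_dvd_two_mul {p : ℕ} (hp : p.Prime) (hodd : p ≠ 2) {x : ℤ} {E : ℕ}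
    (h : (p : ℤ) ^ E ∣ 2 * x) : (p : ℤ) ^ E ∣ x := by
  have hcop : IsCoprime ((p : ℤ) ^ E) (2 : ℤ) := by
    rw [show ((p : ℤ) ^ E) = ((p ^ E : ℕ) : ℤ) by push_cast; ring,
      show (2 : ℤ) = ((2 : ℕ) : ℤ) by norm_num, Nat.isCoprime_iff_coprime]
    exact Nat.Coprime.pow_left E ((Nat.coprime_primes hp Nat.prime_two).mpr hodd)
  exact hcop.dvd_of_dvd_mul_left h

lemma lemC (p : ℕ) (hp : p.Prime) (hodd : p ≠ 2) (v : ℕ → ℤ)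
    (hv : ∀ n : ℕ, 1 ≤ n →
      2 * v n = 2 ^ n * Pi3 n - ∑ m ∈ Finset.Ico 1 n,
        ((2 * n).choose (2 * m) : ℤ) * v m * v (n - m))
    (n : ℕ) : p ^ 2 ≤ 2 * n → (p : ℤ) ^ (2 * n / p ^ 2 + 1) ∣ v n := by
  induction n using Nat.strong_induction_on with
  | _ n IH =>
  intro hn
  have hp3 : 3 ≤ p := by have := hp.two_le; omega
  have hpp : p ^ 2 = p * p := by ring
  have hp2pos : 0 < p ^ 2 := by positivity
  set Q := 2 * n / p ^ 2 with hQdef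
  have hQ1 : 1 ≤ Q := (Nat.one_le_div_iff hp2pos).mpr hn
  have hQle : Q * p ^ 2 ≤ 2 * n := by rw [hQdef]; exact Nat.div_mul_le_self _ _
  have hn1 : 1 ≤ n := by nlinarith
  apply odd_prime_pow_dvd_of_dvd_two_mul hp hodd
  rw [hv n hn1]
  refine dvd_sub (Dvd.dvd.mul_left ?_ _) (Finset.dvd_sum ?_)
  · -- Pi3 part
    have hpn : p ≤ n := by nlinarith
    have hEt : Q + 1 ≤ 2 * (n / p) := by
      set t := n / p with htdef
      have h1 : p * t + n % p = n := Nat.div_add_mod n p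
      have h2 : n % p < p := Nat.mod_lt _ hp.pos
      have h3 : (Q * p) * p ≤ 2 * n := by
        calc (Q * p) * p = Q * p ^ 2 := by ring
        _ ≤ 2 * n := hQle
      have h4 : 2 * n < (2 * t + 2) * p := by
        calc 2 * n = 2 * (p * t + n % p) := by rw [h1]
        _ < 2 * (p * t + p) := by omega
        _ = (2 * t + 2) * p := by ring
      have h5 : Q * p < 2 * t + 2 := Nat.lt_of_mul_lt_mul_right (h3.trans_lt h4)
      have h6 : 3 * Q ≤ Q * p := by
        calc 3 * Q = Q * 3 := by ring
        _ ≤ Q * p := Nat.mul_le_mul_left Q hp3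
      omega
    exact dvd_trans (pow_dvd_pow _ hEt) (pow_dvd_Pi3 hp hodd n hpn)
  · -- sum part
    intro m hm
    rw [Finset.mem_Ico] at hm
    have hcomb : ∀ α β γ : ℕ, (p : ℤ) ^ α ∣ ((2 * n).choose (2 * m) : ℤ) →
        (p : ℤ) ^ β ∣ v m → (p : ℤ) ^ γ ∣ v (n - m) → Q + 1 ≤ α + β + γ →
        (p : ℤ) ^ (Q + 1) ∣ ((2 * n).choose (2 * m) : ℤ) * v m * v (n - m) := by
      intro α β γ hC hb hc hle
      refine dvd_trans (pow_dvd_pow _ hle) ?_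
      rw [pow_add, pow_add]
      exact mul_dvd_mul (mul_dvd_mul hC hb) hc
    -- the "one small, one big" key
    have hkey : ∀ a b : ℕ, a + b = n → 1 ≤ a → 1 ≤ b → 2 * a < p ^ 2 → p ^ 2 ≤ 2 * b →
        ∃ α γ : ℕ, p ^ α ∣ (2 * n).choose (2 * a) ∧ (p : ℤ) ^ γ ∣ v b ∧ Q + 1 ≤ α + γ := by
      intro a b hab ha1 hb1 ha hb
      have hbn : b < n := by omega
      have IHb := IH b hbn hb
      by_cases hQb : Q ≤ 2 * b / p ^ 2
      · exact ⟨0, 2 * b / p ^ 2 + 1, by simp, IHb, by omega⟩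
      · have heq : p ^ 2 * (Q - 1) + p ^ 2 = Q * p ^ 2 := by
          have h' : Q - 1 + 1 = Q := by omega
          calc p ^ 2 * (Q - 1) + p ^ 2 = p ^ 2 * ((Q - 1) + 1) := by ring
          _ = p ^ 2 * Q := by rw [h']
          _ = Q * p ^ 2 := mul_comm _ _
        have hlow : Q - 1 ≤ 2 * b / p ^ 2 := by
          rw [Nat.le_div_iff_mul_le hp2pos]
          have : (Q - 1) * p ^ 2 = p ^ 2 * (Q - 1) := mul_comm _ _
          omega
        have hdb := Nat.div_add_mod (2 * b) (p ^ 2)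
        have hbQ : 2 * b / p ^ 2 = Q - 1 := by omega
        rw [hbQ] at hdb
        -- p ∣ choose via carry at position 2
        have hC : p ∣ (2 * n).choose (2 * a) := by
          refine carry2_dvd_choose hp (by omega) ?_
          have h1 : 2 * a % p ^ 2 = 2 * a := Nat.mod_eq_of_lt ha
          have h2 : 2 * n - 2 * a = 2 * b := by omega
          rw [h1, h2]
          omega
        exact ⟨1, 2 * b / p ^ 2 + 1, by rwa [pow_one], IHb, by omega⟩
    by_cases hma : 2 * m < p ^ 2 <;> by_cases hkb : 2 * (n - m) < p ^ 2
    · -- both small: Q = 1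
      have hQ2 : Q < 2 := by
        rw [hQdef, Nat.div_lt_iff_lt_mul hp2pos]
        omega
      have h2m : 2 * n - 2 * m = 2 * (n - m) := by omega
      have hmod2 : p ^ 2 ≤ 2 * m % p ^ 2 + (2 * n - 2 * m) % p ^ 2 := by
        rw [Nat.mod_eq_of_lt hma, h2m, Nat.mod_eq_of_lt hkb]
        omega
      by_cases hcar : p ≤ (2 * m) % p + (2 * (n - m)) % p
      · have hC : p ^ 2 ∣ (2 * n).choose (2 * m) :=
          carry12_dvd_choose hp (by omega) (by rwa [h2m]) hmod2
        refine hcomb 2 0 0 ?_ (by simp) (by simp) (by omega)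
        exact_mod_cast Int.natCast_dvd_natCast.mpr hC
      · push_neg at hcar
        have hC : p ∣ (2 * n).choose (2 * m) := carry2_dvd_choose hp (by omega) hmod2
        have hsplit : 2 * m % p < 2 * m / p ∨ 2 * (n - m) % p < 2 * (n - m) / p := by
          by_contra hcon
          push_neg at hcon
          obtain ⟨hc1, hc2⟩ := hcon
          have e1 := Nat.div_add_mod (2 * m) p
          have e2 := Nat.div_add_mod (2 * (n - m)) p
          have f1 : p * (2 * m / p) ≤ p * (2 * m % p) := Nat.mul_le_mul_left p hc1
          have f2 : p * (2 * (n - m) / p) ≤ p * (2 * (n - m) % p) :=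
            Nat.mul_le_mul_left p hc2
          have f3 : p * (2 * m % p) + p * (2 * (n - m) % p) ≤ p * (p - 1) := by
            have h' : 2 * m % p + 2 * (n - m) % p ≤ p - 1 := by omega
            calc p * (2 * m % p) + p * (2 * (n - m) % p)
                = p * (2 * m % p + 2 * (n - m) % p) := by ring
            _ ≤ p * (p - 1) := Nat.mul_le_mul_left p h'
          have f4 : p * (p - 1) + (p - 1) + 1 = p * p := by
            zify [show (1 : ℕ) ≤ p by omega]
            ring
          omega
        rcases hsplit with h' | h'
        · have hvm : (p : ℤ) ∣ v m := lemB p hp hodd v hv m (by omega) hma h'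
          refine hcomb 1 1 0 ?_ (by rwa [pow_one]) (by simp) (by omega)
          rw [pow_one]
          exact_mod_cast Int.natCast_dvd_natCast.mpr hC
        · have hvk : (p : ℤ) ∣ v (n - m) := lemB p hp hodd v hv (n - m) (by omega) hkb h'
          refine hcomb 1 0 1 ?_ (by simp) (by rwa [pow_one]) (by omega)
          rw [pow_one]
          exact_mod_cast Int.natCast_dvd_natCast.mpr hC
    · -- m small, n-m big
      push_neg at hkb
      obtain ⟨α, γ, hC, hvb, hle⟩ := hkey m (n - m) (by omega) (by omega) (by omega) hma hkb
      refine hcomb α 0 γ ?_ (by simp) hvb (by omega)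
      exact_mod_cast Int.natCast_dvd_natCast.mpr hC
    · -- m big, n-m small
      push_neg at hma
      obtain ⟨α, γ, hC, hvb, hle⟩ := hkey (n - m) m (by omega) (by omega) (by omega) hkb hma
      have hsymm : (2 * n).choose (2 * (n - m)) = (2 * n).choose (2 * m) := by
        rw [show 2 * (n - m) = 2 * n - 2 * m by omega]
        exact Nat.choose_symm (by omega)
      rw [hsymm] at hC
      refine hcomb α γ 0 ?_ hvb (by simp) (by omega)
      exact_mod_cast Int.natCast_dvd_natCast.mpr hC
    · -- both big
      push_neg at hma hkb
      have IHm := IH m (by omega) hma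
      have IHk := IH (n - m) (by omega) hkb
      have hd := Nat.add_div (a := 2 * m) (b := 2 * (n - m)) hp2pos
      rw [show 2 * m + 2 * (n - m) = 2 * n by omega] at hd
      have hle : Q + 1 ≤ 0 + (2 * m / p ^ 2 + 1) + (2 * (n - m) / p ^ 2 + 1) := by
        rw [hQdef, hd]
        split <;> omega
      exact hcomb 0 (2 * m / p ^ 2 + 1) (2 * (n - m) / p ^ 2 + 1) (by simp) IHm IHk hle


theorem romik_v_vanishes_mod_p_pow
    (p : ℕ) (hp : p.Prime) (hodd : p ≠ 2) (e : ℕ) (he : 2 ≤ e)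
    (v : ℕ → ℤ)
    (hv0 : v 0 = 1)
    (hv : ∀ n : ℕ, 1 ≤ n →
      2 * v n = 2 ^ n * Pi3 n - ∑ m ∈ Finset.Ico 1 n,
        ((2 * n).choose (2 * m) : ℤ) * v m * v (n - m)) :
    ∀ n : ℕ, ((e - 1) * p ^ 2 + 1) / 2 ≤ n → (p : ℤ) ^ e ∣ v n := by
  intro n hn
  have hp2pos : 0 < p ^ 2 := by have := hp.pos; positivity
  have hA : (e - 1) * p ^ 2 ≤ 2 * n := by omega
  have hp2 : p ^ 2 ≤ 2 * n := by
    calc p ^ 2 = 1 * p ^ 2 := (one_mul _).symm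
    _ ≤ (e - 1) * p ^ 2 := Nat.mul_le_mul_right _ (by omega)
    _ ≤ 2 * n := hA
  have hee : e ≤ 2 * n / p ^ 2 + 1 := by
    have : e - 1 ≤ 2 * n / p ^ 2 := (Nat.le_div_iff_mul_le hp2pos).mpr hA
    omega
  exact dvd_trans (pow_dvd_pow _ hee) (lemC p hp hodd v hv n hp2)
end

section
/- Let p be an odd prime number. Then: (1) p divides v(ap+b) for all integers a, b with 1 ≤ a ≤ (p−1)/2 and 0 ≤ b ≤ a−1; (2) p divides v(ap + (p+1)/2 + b) for all integers a, b with 1 ≤ a ≤ (p−1)/2 and 0 ≤ b ≤ a−1. -/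
/-- Auxiliary predicate: the set of indices for which we prove divisibility,
parameterized by `p = 2r+1`. -/
def RGood (p r n : ℕ) : Prop :=
  ∃ a b : ℕ, 1 ≤ a ∧ a ≤ r ∧ b < a ∧ (n = a * p + b ∨ n = a * p + (r + 1) + b)

/-- Two-digit consequence of Lucas' theorem. -/
lemma lucas_dvd {p : ℕ} (hp : p.Prime) {U V S T : ℕ} (hS : S < p) (hT : T < p)
    (h : p ∣ S.choose T * U.choose V) : p ∣ (U * p + S).choose (V * p + T) := by
  haveI : Fact p.Prime := ⟨hp⟩
  have hl := Choose.choose_modEq_choose_mod_mul_choose_div_nat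
    (p := p) (n := U * p + S) (k := V * p + T)
  have e1 : (U * p + S) % p = S := by
    rw [add_comm, Nat.add_mul_mod_self_right, Nat.mod_eq_of_lt hS]
  have e2 : (U * p + S) / p = U := by
    rw [add_comm, Nat.add_mul_div_right _ _ hp.pos, Nat.div_eq_of_lt hS, zero_add]
  have e3 : (V * p + T) % p = T := by
    rw [add_comm, Nat.add_mul_mod_self_right, Nat.mod_eq_of_lt hT]
  have e4 : (V * p + T) / p = V := by
    rw [add_comm, Nat.add_mul_div_right _ _ hp.pos, Nat.div_eq_of_lt hT, zero_add]
  rw [e1, e2, e3, e4] at hl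
  exact Nat.modEq_zero_iff_dvd.mp (hl.trans (Nat.modEq_zero_iff_dvd.mpr h))

/-- `p` divides `Pi3 n` for `p ≤ n`. -/
lemma pi3_dvd {p : ℕ} (hp : p.Prime) (hodd : p ≠ 2) {n : ℕ} (hn : p ≤ n) :
    (p : ℤ) ∣ Pi3 n := by
  haveI : Fact p.Prime := ⟨hp⟩
  have h4 : (4 : ZMod p) ≠ 0 := by
    have hnd : ¬ (p ∣ 4) := by
      intro h
      have h22 : p ∣ 2 ^ 2 := by norm_num at h ⊢; exact h
      have : p ∣ 2 := hp.dvd_of_dvd_pow h22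
      have := (Nat.prime_dvd_prime_iff_eq hp Nat.prime_two).mp this
      exact hodd this
    have : ((4 : ℕ) : ZMod p) ≠ 0 := fun hc => hnd ((ZMod.natCast_eq_zero_iff 4 p).mp hc)
    simpa using this
  set t : ZMod p := 3 * (4 : ZMod p)⁻¹ with ht
  have h4t : 4 * t = 3 := by
    rw [ht, mul_comm (3 : ZMod p), ← mul_assoc, mul_inv_cancel₀ h4, one_mul]
  set j0 : ℕ := if t.val = 0 then p else t.val with hj0
  have hple : 1 ≤ j0 ∧ j0 ≤ p := by
    rw [hj0]; split
    · exact ⟨hp.pos, le_refl p⟩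
    · have := ZMod.val_lt t
      omega
  have hvalc : ((t.val : ℕ) : ZMod p) = t := by
    rw [ZMod.natCast_val, ZMod.cast_id]
  have hj0c : ((j0 : ℕ) : ZMod p) = t := by
    rw [hj0]; split
    · rename_i hzero
      rw [ZMod.natCast_self, ← hvalc, hzero]; simp
    · exact hvalc
  have hdvd : (p : ℤ) ∣ (4 * (j0 : ℤ) - 3) := by
    rw [← ZMod.intCast_zmod_eq_zero_iff_dvd]
    push_cast
    rw [hj0c, h4t, sub_self]
  have hmem : j0 ∈ Finset.Icc 1 n := Finset.mem_Icc.mpr ⟨hple.1, le_trans hple.2 hn⟩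
  show (p : ℤ) ∣ ∏ j ∈ Finset.Icc 1 n, (4 * (j : ℤ) - 3) ^ 2
  refine (hdvd.trans (dvd_pow_self _ two_ne_zero)).trans ?_
  exact Finset.dvd_prod_of_mem (f := fun j : ℕ => (4 * (j : ℤ) - 3) ^ 2) hmem

theorem romik_v_small_divisibility
    (p : ℕ) (hp : p.Prime) (hodd : p ≠ 2)
    (v : ℕ → ℤ)
    (hv0 : v 0 = 1)
    (hv : ∀ n : ℕ, 1 ≤ n →
      2 * v n = 2 ^ n * Pi3 n - ∑ m ∈ Finset.Ico 1 n,
        ((2 * n).choose (2 * m) : ℤ) * v m * v (n - m)) :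
    (∀ a b : ℕ, 1 ≤ a → a ≤ (p - 1) / 2 → b ≤ a - 1 →
      (p : ℤ) ∣ v (a * p + b)) ∧
    (∀ a b : ℕ, 1 ≤ a → a ≤ (p - 1) / 2 → b ≤ a - 1 →
      (p : ℤ) ∣ v (a * p + (p + 1) / 2 + b)) := by
  have hp2 := hp.two_le
  obtain ⟨r, hpr⟩ : ∃ r, p = 2 * r + 1 := by
    rcases hp.eq_two_or_odd' with h | h
    · exact absurd h hodd
    · exact h
  have hr1 : 1 ≤ r := by omega
  have key : ∀ n : ℕ, RGood p r n → (p : ℤ) ∣ v n := by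
    intro n
    induction n using Nat.strong_induction_on with
    | _ n IH =>
      rintro ⟨a, b, ha1, har, hba, hcase⟩
      have hap : p ≤ a * p := by
        calc p = 1 * p := (one_mul p).symm
        _ ≤ a * p := Nat.mul_le_mul_right p ha1
      have hpn : p ≤ n := by rcases hcase with h | h <;> omega
      have hn1 : 1 ≤ n := by omega
      have heq := hv n hn1
      have hsum : (p : ℤ) ∣ ∑ m ∈ Finset.Ico 1 n,
          ((2 * n).choose (2 * m) : ℤ) * v m * v (n - m) := by
        apply Finset.dvd_sum
        intro m hm
        rw [Finset.mem_Ico] at hm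
        obtain ⟨hm1, hmn⟩ := hm
        have hnm_lt : n - m < n := by omega
        obtain ⟨x, y, hy, hxm⟩ : ∃ x y : ℕ, y < p ∧ m = x * p + y :=
          ⟨m / p, m % p, Nat.mod_lt _ (by omega), by
            rw [mul_comm]; exact (Nat.div_add_mod m p).symm⟩
        have main : p ∣ (2 * n).choose (2 * m) ∨ RGood p r m ∨ RGood p r (n - m) := by
          rcases hcase with hn' | hn'
          · -- n = a*p + b
            have h2n : 2 * n = (2 * a) * p + 2 * b := by rw [hn']; ring
            by_cases hyr : y ≤ r
            · have h2m : 2 * m = (2 * x) * p + 2 * y := by rw [hxm]; ring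
              by_cases hyb : b < y
              · left; rw [h2n, h2m]
                exact lucas_dvd hp (by omega) (by omega)
                  (by rw [Nat.choose_eq_zero_of_lt (by omega)]; simp)
              · by_cases hxa : a < x
                · left; rw [h2n, h2m]
                  exact lucas_dvd hp (by omega) (by omega)
                    (by rw [Nat.choose_eq_zero_of_lt (show 2 * a < 2 * x by omega)]; simp)
                · by_cases hyx : y < x
                  · exact Or.inr (Or.inl ⟨x, y, by omega, by omega, hyx, Or.inl hxm⟩)
                  · right; right
                    have hxa' : x < a := by omega
                    obtain ⟨d, hd⟩ : ∃ d, a = x + (d + 1) := ⟨a - x - 1, by omega⟩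
                    obtain ⟨e, he⟩ : ∃ e, b = y + e := ⟨b - y, by omega⟩
                    refine ⟨d + 1, e, by omega, by omega, by omega, Or.inl ?_⟩
                    have hs : n = ((d + 1) * p + e) + m := by
                      rw [hn', hxm, hd, he]; ring
                    rw [hs, Nat.add_sub_cancel]
            · obtain ⟨z, hz⟩ : ∃ z, y = (r + 1) + z := ⟨y - (r + 1), by omega⟩
              have hzr : z ≤ r - 1 := by omega
              have h2m : 2 * m = (2 * x + 1) * p + (2 * z + 1) := by
                rw [hxm, hz, hpr]; ring
              by_cases hzb : b ≤ z
              · left; rw [h2n, h2m]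
                exact lucas_dvd hp (by omega) (by omega)
                  (by rw [Nat.choose_eq_zero_of_lt (show 2 * b < 2 * z + 1 by omega)]; simp)
              · by_cases hxa : a ≤ x
                · left; rw [h2n, h2m]
                  exact lucas_dvd hp (by omega) (by omega)
                    (by rw [Nat.choose_eq_zero_of_lt (show 2 * a < 2 * x + 1 by omega)]; simp)
                · by_cases hzx : z < x
                  · refine Or.inr (Or.inl ⟨x, z, by omega, by omega, hzx, Or.inr ?_⟩)
                    rw [hxm, hz]; ring
                  · right; right
                    obtain ⟨d, hd⟩ : ∃ d, a = x + d + 2 := ⟨a - x - 2, by omega⟩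
                    obtain ⟨e, he⟩ : ∃ e, b = z + e + 1 := ⟨b - z - 1, by omega⟩
                    refine ⟨d + 1, e, by omega, by omega, by omega, Or.inr ?_⟩
                    have hs : n = ((d + 1) * p + (r + 1) + e) + m := by
                      rw [hn', hxm, hz, hd, he, hpr]; ring
                    rw [hs, Nat.add_sub_cancel]
          · -- n = a*p + (r+1) + b
            have h2n : 2 * n = (2 * a + 1) * p + (2 * b + 1) := by rw [hn', hpr]; ring
            by_cases hyr : y ≤ r
            · have h2m : 2 * m = (2 * x) * p + 2 * y := by rw [hxm]; ring
              by_cases hyb : b < y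
              · left; rw [h2n, h2m]
                exact lucas_dvd hp (by omega) (by omega)
                  (by rw [Nat.choose_eq_zero_of_lt (show 2 * b + 1 < 2 * y by omega)]; simp)
              · by_cases hxa : a < x
                · left; rw [h2n, h2m]
                  exact lucas_dvd hp (by omega) (by omega)
                    (by rw [Nat.choose_eq_zero_of_lt (show 2 * a + 1 < 2 * x by omega)]; simp)
                · by_cases hyx : y < x
                  · exact Or.inr (Or.inl ⟨x, y, by omega, by omega, hyx, Or.inl hxm⟩)
                  · right; right
                    have hxa' : x < a := by omega
                    obtain ⟨d, hd⟩ : ∃ d, a = x + (d + 1) := ⟨a - x - 1, by omega⟩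
                    obtain ⟨e, he⟩ : ∃ e, b = y + e := ⟨b - y, by omega⟩
                    refine ⟨d + 1, e, by omega, by omega, by omega, Or.inr ?_⟩
                    have hs : n = ((d + 1) * p + (r + 1) + e) + m := by
                      rw [hn', hxm, hd, he]; ring
                    rw [hs, Nat.add_sub_cancel]
            · obtain ⟨z, hz⟩ : ∃ z, y = (r + 1) + z := ⟨y - (r + 1), by omega⟩
              have hzr : z ≤ r - 1 := by omega
              have h2m : 2 * m = (2 * x + 1) * p + (2 * z + 1) := by
                rw [hxm, hz, hpr]; ring
              by_cases hzb : b < z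
              · left; rw [h2n, h2m]
                exact lucas_dvd hp (by omega) (by omega)
                  (by rw [Nat.choose_eq_zero_of_lt (show 2 * b + 1 < 2 * z + 1 by omega)]; simp)
              · by_cases hxa : a < x
                · left; rw [h2n, h2m]
                  exact lucas_dvd hp (by omega) (by omega)
                    (by rw [Nat.choose_eq_zero_of_lt (show 2 * a + 1 < 2 * x + 1 by omega)]; simp)
                · by_cases hzx : z < x
                  · refine Or.inr (Or.inl ⟨x, z, by omega, by omega, hzx, Or.inr ?_⟩)
                    rw [hxm, hz]; ring
                  · right; right
                    have hxa' : x < a := by omega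
                    obtain ⟨d, hd⟩ : ∃ d, a = x + (d + 1) := ⟨a - x - 1, by omega⟩
                    obtain ⟨e, he⟩ : ∃ e, b = z + e := ⟨b - z, by omega⟩
                    refine ⟨d + 1, e, by omega, by omega, by omega, Or.inl ?_⟩
                    have hs : n = ((d + 1) * p + e) + m := by
                      rw [hn', hxm, hz, hd, he, hpr]; ring
                    rw [hs, Nat.add_sub_cancel]
        rcases main with h | h | h
        · exact dvd_mul_of_dvd_left (dvd_mul_of_dvd_left (Int.natCast_dvd_natCast.mpr h) _) _
        · exact dvd_mul_of_dvd_left (dvd_mul_of_dvd_right (IH m hmn h) _) _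
        · exact dvd_mul_of_dvd_right (IH _ hnm_lt h) _
      have hd2 : (p : ℤ) ∣ 2 * v n := by
        rw [heq]
        exact dvd_sub (Dvd.dvd.mul_left (pi3_dvd hp hodd hpn) _) hsum
      have hprime : Prime ((p : ℕ) : ℤ) := Nat.prime_iff_prime_int.mp hp
      rcases hprime.dvd_mul.mp hd2 with h | h
      · exfalso
        have h2 : p ∣ 2 := by exact_mod_cast h
        have := Nat.le_of_dvd (by norm_num) h2
        omega
      · exact h
  constructor
  · intro a b ha har hb
    exact key _ ⟨a, b, ha, by omega, by omega, Or.inl rfl⟩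
  · intro a b ha har hb
    have hh : (p + 1) / 2 = r + 1 := by omega
    exact key _ ⟨a, b, ha, by omega, by omega, Or.inr (by rw [hh])⟩
end

section
/- Let p be a prime with p ≡ 1 (mod 4) and let e be an odd positive integer. Assume that for every integer h with 1 ≤ h < e, p^h divides u(n) for all n ≥ ⌈hp/2⌉. Then u((ep−1)/2) ≡ Π1((ep−1)/2) − Σ_{i=1}^{(e−1)/2} C(ep, 2ip)·Π3(ip)·u((ep−1)/2 − ip) (mod p^e). -/
/-- Key valuation lemma for `Pi3`: if the first `T` positive numbers `(4t+1)p`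
fit below `4ℓ - 3`, then `p^(2T)` divides `Pi3 ℓ`. -/
lemma pi3_pow_dvd (p T ℓ : ℕ) (hp4 : p % 4 = 1) (hp5 : 5 ≤ p)
    (hT : ∀ t, t < T → (4*t+1)*p + 3 ≤ 4*ℓ) :
    (p:ℤ)^(2*T) ∣ Pi3 ℓ := by
  have hfval : ∀ t : ℕ, 4 * (t*p + (p+3)/4) = (4*t+1)*p + 3 := by
    intro t
    have h1 : (4*t+1)*p = 4*(t*p) + p := by ring
    omega
  set f : ℕ → ℕ := fun t => t*p + (p+3)/4 with hfdef
  have hfval' : ∀ t : ℕ, 4 * f t = (4*t+1)*p + 3 := hfval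
  have hinj : ∀ t ∈ Finset.range T, ∀ s ∈ Finset.range T, f t = f s → t = s := by
    intro t _ s _ h
    have h1 := hfval' t
    have h2 := hfval' s
    have h3 : (4*t+1)*p = (4*s+1)*p := by omega
    have h4 : 4*t+1 = 4*s+1 := Nat.eq_of_mul_eq_mul_right (by omega) h3
    omega
  have hsub : (Finset.range T).image f ⊆ Finset.Icc 1 ℓ := by
    intro j hj
    simp only [Finset.mem_image, Finset.mem_range] at hj
    obtain ⟨t, ht, rfl⟩ := hj
    have h1 := hfval' t
    have h2 := hT t ht
    have h3 : (4*t+1)*p = 4*(t*p) + p := by ring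
    simp only [Finset.mem_Icc]
    omega
  calc (p:ℤ)^(2*T) = ∏ _t ∈ Finset.range T, (p:ℤ)^2 := by
        rw [Finset.prod_const, Finset.card_range, ← pow_mul, mul_comm]
      _ ∣ ∏ t ∈ Finset.range T, (4*((f t : ℕ):ℤ) - 3)^2 := by
        apply Finset.prod_dvd_prod_of_dvd
        intro t _
        apply pow_dvd_pow_of_dvd
        have h := hfval' t
        have h' : (4 * (f t : ℤ)) = ((4*t+1)*p + 3 : ℕ) := by exact_mod_cast congrArg (Nat.cast : ℕ → ℤ) h
        push_cast at h'
        have heq : (4*((f t : ℕ):ℤ) - 3) = (4*(t:ℤ)+1)*(p:ℤ) := by linarith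
        rw [heq]
        exact dvd_mul_left _ _
      _ = ∏ j ∈ (Finset.range T).image f, (4*(j:ℤ) - 3)^2 := by
        rw [Finset.prod_image hinj]
      _ ∣ Pi3 ℓ := Finset.prod_dvd_prod_of_subset _ _ _ hsub

theorem romik_u_reduced_recurrence
    (p : ℕ) (hp : p.Prime) (hp1 : p % 4 = 1)
    (e : ℕ) (he : 1 ≤ e) (heodd : Odd e)
    (u : ℕ → ℤ)
    (hu0 : u 0 = 1)
    (hu : ∀ n : ℕ, 1 ≤ n →
      u n = Pi1 n - ∑ m ∈ Finset.range n,
        ((2 * n + 1).choose (2 * m + 1) : ℤ) * Pi3 (n - m) * u m)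
    (hdiv : ∀ h : ℕ, 1 ≤ h → h < e → ∀ n : ℕ, (h * p + 1) / 2 ≤ n → (p : ℤ) ^ h ∣ u n) :
    (p : ℤ) ^ e ∣ u ((e * p - 1) / 2) -
      (Pi1 ((e * p - 1) / 2) - ∑ i ∈ Finset.Icc 1 ((e - 1) / 2),
        ((e * p).choose (2 * i * p) : ℤ) * Pi3 (i * p) * u ((e * p - 1) / 2 - i * p)) := by
  classical
  have hp5 : 5 ≤ p := by
    have := hp.two_le
    omega
  have hpodd : p % 2 = 1 := by omega
  have hEodd : (e * p) % 2 = 1 := Nat.odd_iff.mp (heodd.mul (Nat.odd_iff.mpr hpodd))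
  have hpE : p ≤ e * p := Nat.le_mul_of_pos_left p he
  have he2 : e % 2 = 1 := Nat.odd_iff.mp heodd
  obtain ⟨N, hNdef⟩ : ∃ N, (e * p - 1) / 2 = N := ⟨_, rfl⟩
  rw [hNdef]
  have h2N : 2 * N + 1 = e * p := by omega
  have hN1 : 1 ≤ N := by omega
  set S : Finset ℕ := (Finset.Icc 1 ((e - 1) / 2)).image (fun i => N - i * p) with hS
  have hip : ∀ i, i ∈ Finset.Icc 1 ((e - 1) / 2) →
      i * p ≤ N ∧ 2 * (i * p) + p ≤ 2 * N + 1 ∧ p ≤ i * p ∧ 2 * i * p = 2 * (i * p) := by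
    intro i hi
    simp only [Finset.mem_Icc] at hi
    have h1 : 2 * i + 1 ≤ e := by omega
    have h2 : (2 * i + 1) * p ≤ e * p := Nat.mul_le_mul_right p h1
    have h3 : (2 * i + 1) * p = 2 * (i * p) + p := by ring
    have h4 : p ≤ i * p := Nat.le_mul_of_pos_left p (by omega)
    have h5 : 2 * i * p = 2 * (i * p) := by ring
    omega
  have hinj : ∀ x ∈ Finset.Icc 1 ((e - 1) / 2), ∀ y ∈ Finset.Icc 1 ((e - 1) / 2),
      N - x * p = N - y * p → x = y := by
    intro x hx y hy h
    have h1 := hip x hx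
    have h2 := hip y hy
    have h3 : x * p = y * p := by omega
    exact Nat.eq_of_mul_eq_mul_right (by omega) h3
  have hSsub : S ⊆ Finset.range N := by
    intro m hm
    simp only [hS, Finset.mem_image] at hm
    obtain ⟨i, hi, rfl⟩ := hm
    have h1 := hip i hi
    simp only [Finset.mem_range]
    omega
  have hreindex : ∑ i ∈ Finset.Icc 1 ((e - 1) / 2),
      ((e * p).choose (2 * i * p) : ℤ) * Pi3 (i * p) * u (N - i * p)
      = ∑ m ∈ S, ((e * p).choose (2 * m + 1) : ℤ) * Pi3 (N - m) * u m := by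
    rw [hS, Finset.sum_image hinj]
    apply Finset.sum_congr rfl
    intro i hi
    have h1 := hip i hi
    have h2 : N - (N - i * p) = i * p := by omega
    have h3 : 2 * (N - i * p) + 1 = e * p - 2 * i * p := by omega
    have h4 : 2 * i * p ≤ e * p := by omega
    rw [h2, h3, Nat.choose_symm h4]
  have hrec := hu N hN1
  rw [h2N] at hrec
  have hkey : ∀ m ∈ Finset.range N \ S,
      (p:ℤ)^e ∣ ((e * p).choose (2 * m + 1) : ℤ) * Pi3 (N - m) * u m := by
    intro m hm
    simp only [Finset.mem_sdiff, Finset.mem_range] at hm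
    obtain ⟨hmN, hmS⟩ := hm
    -- p does not divide 2m+1
    have hnd : ¬ (p ∣ 2 * m + 1) := by
      intro hdvd
      obtain ⟨c, hcdef⟩ : ∃ c, (2 * m + 1) / p = c := ⟨_, rfl⟩
      have hcp : c * p = 2 * m + 1 := by
        rw [← hcdef]; exact Nat.div_mul_cancel hdvd
      have hcodd : c % 2 = 1 := by
        rcases Nat.even_or_odd c with hce | hco
        · exfalso
          obtain ⟨d, hd⟩ := hce
          have : c * p = (d + d) * p := by rw [← hd]
          have h2 : (d + d) * p = 2 * (d * p) := by ring
          omega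
        · exact Nat.odd_iff.mp hco
      have hce : c < e := by
        by_contra hccc
        push_neg at hccc
        have : e * p ≤ c * p := Nat.mul_le_mul_right p hccc
        omega
      obtain ⟨i, hidef⟩ : ∃ i, (e - c) / 2 = i := ⟨_, rfl⟩
      have h2i : 2 * i = e - c := by omega
      have hiip : 2 * (i * p) = e * p - c * p := by
        have e0 : (2 * i) * p = (e - c) * p := by rw [h2i]
        have e1 : (2 * i) * p = 2 * (i * p) := by ring
        have e2 : (e - c) * p = e * p - c * p := Nat.sub_mul e c p
        omega
      have hcpe : c * p ≤ e * p := Nat.mul_le_mul_right p hce.le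
      apply hmS
      simp only [hS, Finset.mem_image, Finset.mem_Icc]
      exact ⟨i, ⟨by omega, by omega⟩, by omega⟩
    -- p divides the binomial coefficient
    have hbin : p ∣ (e * p).choose (2 * m + 1) := by
      have hid := Nat.add_one_mul_choose_eq (e * p - 1) (2 * m)
      have hs1 : e * p - 1 + 1 = e * p := by omega
      rw [hs1] at hid
      have hpl : p ∣ (e * p).choose (2 * m + 1) * (2 * m + 1) := by
        have : (e * p).choose ((2 * m).succ) * (2 * m).succ = e * p * (e * p - 1).choose (2 * m) :=
          hid.symm
        rw [show (2 * m).succ = 2 * m + 1 from rfl] at this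
        rw [this]
        exact Dvd.dvd.mul_right (dvd_mul_left p e) _
      rcases (Nat.Prime.dvd_mul hp).mp hpl with h | h
      · exact h
      · exact absurd h hnd
    -- set up q, r, T
    obtain ⟨q, hqdef⟩ : ∃ q, (2 * m + 1) / p = q := ⟨_, rfl⟩
    obtain ⟨r, hrdef⟩ : ∃ r, (2 * m + 1) % p = r := ⟨_, rfl⟩
    have hdm : p * q + r = 2 * m + 1 := by
      rw [← hqdef, ← hrdef]; exact Nat.div_add_mod _ _
    have hrlt : r < p := by rw [← hrdef]; exact Nat.mod_lt _ (by omega)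
    have hr1 : 1 ≤ r := by
      rcases Nat.eq_zero_or_pos r with h0 | h
      · exact absurd ⟨q, by omega⟩ hnd
      · exact h
    have hqpm : q * p = p * q := mul_comm q p
    have hqe : q < e := by
      by_contra hcc
      push_neg at hcc
      have : e * p ≤ q * p := Nat.mul_le_mul_right p hcc
      omega
    obtain ⟨T, hTdef⟩ : ∃ T, (e - q) / 2 = T := ⟨_, rfl⟩
    -- Pi3 divisibility
    have hPi3 : (p:ℤ)^(2*T) ∣ Pi3 (N - m) := by
      apply pi3_pow_dvd p T (N - m) hp1 hp5
      intro t ht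
      have h1 : 4 * t + 2 * q + 4 ≤ 2 * e := by omega
      have h2 : (4 * t + 2 * q + 4) * p ≤ (2 * e) * p := Nat.mul_le_mul_right p h1
      have h3 : (4 * t + 2 * q + 4) * p = 4 * (t * p) + 2 * (q * p) + 4 * p := by ring
      have h4 : (2 * e) * p = 2 * (e * p) := by ring
      have h5 : (4 * t + 1) * p = 4 * (t * p) + p := by ring
      omega
    have hum : (p:ℤ)^q ∣ u m := by
      rcases Nat.eq_zero_or_pos q with hq0 | hq1
      · rw [hq0]; simp
      · exact hdiv q hq1 hqe m (by omega)
    have hcomb : (p:ℤ)^(1 + 2*T + q) ∣ ((e * p).choose (2 * m + 1) : ℤ) * Pi3 (N - m) * u m := by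
      rw [pow_add, pow_add, pow_one]
      exact mul_dvd_mul (mul_dvd_mul (Int.natCast_dvd_natCast.mpr hbin) hPi3) hum
    exact dvd_trans (pow_dvd_pow _ (by omega)) hcomb
  have hfinal : u N - (Pi1 N - ∑ i ∈ Finset.Icc 1 ((e - 1) / 2),
      ((e * p).choose (2 * i * p) : ℤ) * Pi3 (i * p) * u (N - i * p))
      = -(∑ m ∈ Finset.range N \ S, ((e * p).choose (2 * m + 1) : ℤ) * Pi3 (N - m) * u m) := by
    rw [hrec, hreindex, ← Finset.sum_sdiff hSsub]
    ring
  rw [hfinal, dvd_neg]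
  exact Finset.dvd_sum hkey
end

section
/- Let n and k be positive integers, and let (c_1, c_2, …, c_n) be a tuple of non-negative integers with Σ_{i=1}^n c_i = k and Σ_{i=1}^n i·c_i = n, which is not equal to any of the three tuples (n, 0, …, 0), (n−2, 1, 0, …, 0), (n−4, 2, 0, …, 0). Then 2^{1 + max{v_2(i) : c_1 < i ≤ n}} divides 2^{n−k}·(2n)!/∏_{i=1}^n ((2i)!)^{c_i}·c_i!, where v_2 denotes the 2-adic valuation. (Note that n ≥ k, so 2^{n−k} is an integer, and the quantity (2n)!/∏_{i=1}^n ((2i)!)^{c_i}·c_i! is an integer, being the number of partitions of a set of size 2n into c_i blocks of size 2i for each i.) -/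
open Nat

private def S2 (m : ℕ) : ℕ := (Nat.digits 2 m).sum

private lemma S2_zero : S2 0 = 0 := by simp [S2]

private lemma S2_def {m : ℕ} (h : 0 < m) : S2 m = m % 2 + S2 (m / 2) := by
  unfold S2
  rw [Nat.digits_def' (by norm_num : 1 < 2) h, List.sum_cons]

private lemma S2_le (m : ℕ) : S2 m ≤ m := by
  induction m using Nat.strong_induction_on with
  | _ m ih =>
    rcases Nat.eq_zero_or_pos m with rfl | hm
    · simp [S2_zero]
    · rw [S2_def hm]
      have h2 : m / 2 < m := Nat.div_lt_self hm (by norm_num)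
      have := ih _ h2
      omega

private lemma S2_pos {m : ℕ} (h : 0 < m) : 0 < S2 m := by
  induction m using Nat.strong_induction_on with
  | _ m ih =>
    rw [S2_def h]
    rcases Nat.lt_or_ge m 2 with hm | hm
    · interval_cases m
      simp [S2_zero]
    · have h2 : m / 2 < m := Nat.div_lt_self h (by norm_num)
      have := ih _ h2 (by omega)
      omega

private lemma S2_two_mul (m : ℕ) : S2 (2 * m) = S2 m := by
  rcases Nat.eq_zero_or_pos m with rfl | hm
  · rfl
  · rw [S2_def (by omega : 0 < 2 * m)]
    simp [Nat.mul_div_cancel_left, Nat.mul_mod_right]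

private def len2 (m : ℕ) : ℕ := (Nat.digits 2 m).length

private lemma S2_le_len2 (m : ℕ) : S2 m ≤ len2 m := by
  have h := List.sum_le_card_nsmul (Nat.digits 2 m) 1
    (fun x hx => by have := Nat.digits_lt_base (by norm_num) hx; omega)
  simpa [S2, len2] using h

private lemma lt_two_pow_len2 (m : ℕ) : m < 2 ^ len2 m :=
  Nat.lt_base_pow_length_digits (by norm_num)

private lemma len2_def {m : ℕ} (h : 0 < m) : len2 m = len2 (m / 2) + 1 := by
  unfold len2
  rw [Nat.digits_def' (by norm_num : 1 < 2) h, List.length_cons]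

private lemma len2_le {m : ℕ} (h : 0 < m) : len2 m ≤ m := by
  induction m using Nat.strong_induction_on with
  | _ m ih =>
    rw [len2_def h]
    rcases Nat.lt_or_ge m 2 with hm | hm
    · interval_cases m
      · simp [len2]
    · have h2 : m / 2 < m := Nat.div_lt_self h (by norm_num)
      have := ih _ h2 (by omega)
      omega

private lemma S2_add_len2_le {m : ℕ} (h : 0 < m) : S2 m + len2 m ≤ m + 1 := by
  induction m using Nat.strong_induction_on with
  | _ m ih =>
    rcases Nat.lt_or_ge m 2 with hm | hm
    · interval_cases m
      · simp [S2, len2]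
    · have h2 : m / 2 < m := Nat.div_lt_self h (by norm_num)
      have := ih _ h2 (by omega)
      rw [S2_def h, len2_def h]
      omega

private lemma S2_eq_zero {m : ℕ} (h : S2 m = 0) : m = 0 := by
  by_contra hm
  exact absurd h (by have := S2_pos (Nat.pos_of_ne_zero hm); omega)

private lemma S2_pow_two_mul (t m : ℕ) : S2 (2 ^ t * m) = S2 m := by
  induction t with
  | zero => simp
  | succ t ih => rw [pow_succ, mul_comm (2^t) 2, mul_assoc, S2_two_mul, ih]

private lemma S2_one_pow {i : ℕ} (hi : 0 < i) (h : S2 i = 1) : ∃ t, i = 2 ^ t := by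
  induction i using Nat.strong_induction_on with
  | _ i ih =>
    rcases Nat.lt_or_ge i 2 with hm | hm
    · interval_cases i
      · exact ⟨0, rfl⟩
    · rw [S2_def (by omega)] at h
      rcases Nat.even_or_odd i with he | ho
      · have h2 : i % 2 = 0 := Nat.even_iff.mp he
        have hd : S2 (i / 2) = 1 := by omega
        obtain ⟨t, ht⟩ := ih (i / 2) (Nat.div_lt_self (by omega) (by norm_num)) (by omega) hd
        exact ⟨t + 1, by omega⟩
      · have h2 : i % 2 = 1 := Nat.odd_iff.mp ho
        have hd : S2 (i / 2) = 0 := by omega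
        have := S2_eq_zero hd
        omega

private lemma v2_factorial (m : ℕ) : padicValNat 2 (m !) + S2 m = m := by
  have h := sub_one_mul_padicValNat_factorial (p := 2) m
  have h2 := S2_le m
  simp only [S2] at h2 ⊢
  omega

private lemma v2_carry (a b : ℕ) :
    S2 a + S2 b = padicValNat 2 ((a + b).choose a) + S2 (a + b) := by
  have key : (a + b).choose a * a ! * b ! = (a + b)! := by
    have := Nat.choose_mul_factorial_mul_factorial (Nat.le_add_right a b)
    simpa using this
  have hc : (a + b).choose a ≠ 0 := (Nat.choose_pos (Nat.le_add_right a b)).ne'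
  have h1 : padicValNat 2 ((a + b).choose a) + padicValNat 2 (a !) + padicValNat 2 (b !)
      = padicValNat 2 ((a + b)!) := by
    rw [← padicValNat.mul hc (Nat.factorial_ne_zero a),
        ← padicValNat.mul (by positivity) (Nat.factorial_ne_zero b), key]
  have ha := v2_factorial a
  have hb := v2_factorial b
  have hab := v2_factorial (a + b)
  omega

private lemma S2_add_le (a b : ℕ) : S2 (a + b) ≤ S2 a + S2 b := by
  have := v2_carry a b; omega

private lemma S2_sum_le (s : Finset ℕ) (f : ℕ → ℕ) :
    S2 (∑ i ∈ s, f i) ≤ ∑ i ∈ s, S2 (f i) := by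
  classical
  induction s using Finset.cons_induction with
  | empty => simp [S2_zero]
  | cons a s ha ih =>
    rw [Finset.sum_cons, Finset.sum_cons]
    exact le_trans (S2_add_le _ _) (by omega)

private lemma two_mul_le_two_pow {c : ℕ} (h : 1 ≤ c) : 2 * c ≤ 2 ^ c := by
  induction c, h using Nat.le_induction with
  | base => norm_num
  | succ c hc ih =>
    have h2 : 2 ≤ 2 ^ c := Nat.one_lt_two_pow_iff.mpr (by omega)
    rw [pow_succ]
    omega

private lemma two_mul_lt_two_pow {c : ℕ} (h : 3 ≤ c) : 2 * c < 2 ^ c := by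
  induction c, h using Nat.le_induction with
  | base => norm_num
  | succ c hc ih =>
    have h2 : 2 ≤ 2 ^ c := Nat.one_lt_two_pow_iff.mpr (by omega)
    rw [pow_succ]
    omega

private lemma add_two_le_two_pow {t : ℕ} (h : 2 ≤ t) : t + 2 ≤ 2 ^ t := by
  induction t, h using Nat.le_induction with
  | base => norm_num
  | succ t ht ih =>
    have h2 : 2 ≤ 2 ^ t := Nat.one_lt_two_pow_iff.mpr (by omega)
    rw [pow_succ]
    omega

/-- The per-part inequality, strict version. -/
private lemma peri_lt {i c : ℕ} (h2 : 2 ≤ i) (hc : 1 ≤ c) (hx : ¬(i = 2 ∧ c ≤ 2)) :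
    i * c * 2 ^ S2 (i * c) < 2 ^ (c * (i - 2 + S2 i) + S2 c) := by
  by_cases hS : S2 i = 1
  · -- i is a power of two
    obtain ⟨t, rfl⟩ := S2_one_pow (by omega) hS
    have ht1 : 1 ≤ t := by
      have := Nat.one_lt_two_pow_iff.mp (by omega : 1 < 2 ^ t)
      omega
    rw [S2_pow_two_mul, hS]
    rcases Nat.eq_or_lt_of_le ht1 with rfl | ht2
    · -- i = 2, so c ≥ 3
      rw [pow_one] at hx ⊢
      have hc3 : 3 ≤ c := by
        push_neg at hx
        have := hx rfl
        omega
      have key : 2 * c < 2 ^ c := two_mul_lt_two_pow hc3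
      calc 2 * c * 2 ^ S2 c < 2 ^ c * 2 ^ S2 c :=
            (Nat.mul_lt_mul_right (pow_pos (by norm_num) _)).mpr key
        _ = 2 ^ (c * (2 - 2 + 1) + S2 c) := by rw [← pow_add]; ring_nf
    · -- i = 2^t, t ≥ 2
      have ht : 2 ≤ t := ht2
      have hlen : len2 c ≤ c := len2_le (by omega)
      have hexp : t + len2 c ≤ c * (2 ^ t - 2 + 1) := by
        have h1 : t + 2 ≤ 2 ^ t := add_two_le_two_pow ht
        have h3 : c * (t + 1) ≤ c * (2 ^ t - 2 + 1) :=
          Nat.mul_le_mul_left c (by omega)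
        have h4 : t + c ≤ c * (t + 1) := by nlinarith
        omega
      calc 2 ^ t * c * 2 ^ S2 c < 2 ^ t * 2 ^ len2 c * 2 ^ S2 c := by
            have hlt : 2 ^ t * c < 2 ^ t * 2 ^ len2 c :=
              (Nat.mul_lt_mul_left (pow_pos (by norm_num) _)).mpr (lt_two_pow_len2 c)
            exact (Nat.mul_lt_mul_right (pow_pos (by norm_num) _)).mpr hlt
        _ = 2 ^ (t + len2 c + S2 c) := by rw [← pow_add, ← pow_add]
        _ ≤ 2 ^ (c * (2 ^ t - 2 + 1) + S2 c) :=
            Nat.pow_le_pow_right (by norm_num) (by omega)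
  · -- S2 i ≥ 2
    have hS2 : 2 ≤ S2 i := by have := S2_pos (show 0 < i by omega); omega
    have hic : 0 < i * c := Nat.mul_pos (by omega) hc
    have hlen : len2 (i * c) + S2 (i * c) ≤ i * c + 1 := by
      have := S2_add_len2_le hic
      omega
    have hexp : i * c + 1 ≤ c * (i - 2 + S2 i) + S2 c := by
      have e1 : c * (i - 2 + S2 i) = c * (i - 2) + c * S2 i := Nat.mul_add c _ _
      have e2 : c * (i - 2) + c * 2 = c * i := by
        rw [← Nat.mul_add]
        congr 1
        omega
      have e3 : c * 2 ≤ c * S2 i := Nat.mul_le_mul_left c hS2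
      have e4 : 1 ≤ S2 c := S2_pos (by omega)
      have e5 : c * i = i * c := Nat.mul_comm c i
      omega
    calc i * c * 2 ^ S2 (i * c) < 2 ^ len2 (i * c) * 2 ^ S2 (i * c) :=
          (Nat.mul_lt_mul_right (pow_pos (by norm_num) _)).mpr (lt_two_pow_len2 _)
      _ = 2 ^ (len2 (i * c) + S2 (i * c)) := by rw [← pow_add]
      _ ≤ 2 ^ (i * c + 1) := Nat.pow_le_pow_right (by norm_num) hlen
      _ ≤ 2 ^ (c * (i - 2 + S2 i) + S2 c) := Nat.pow_le_pow_right (by norm_num) hexp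

private lemma peri_le {i c : ℕ} (h2 : 2 ≤ i) (hc : 1 ≤ c) :
    i * c * 2 ^ S2 (i * c) ≤ 2 ^ (c * (i - 2 + S2 i) + S2 c) := by
  by_cases hx : i = 2 ∧ c ≤ 2
  · obtain ⟨rfl, hc2⟩ := hx
    interval_cases c
    · show 2 * 1 * 2 ^ S2 2 ≤ 2 ^ (1 * (2 - 2 + S2 2) + S2 1)
      have e1 : S2 2 = 1 := by rw [S2_def] <;> simp [S2]
      have e2 : S2 1 = 1 := by rw [S2_def] <;> simp [S2]
      rw [e1, e2]; norm_num
    · show 2 * 2 * 2 ^ S2 4 ≤ 2 ^ (2 * (2 - 2 + S2 2) + S2 2)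
      have e1 : S2 2 = 1 := by rw [S2_def] <;> simp [S2]
      have e4 : S2 4 = 1 := by
        have : (4 : ℕ) = 2 ^ 2 * 1 := by norm_num
        rw [this, S2_pow_two_mul]
        rw [S2_def] <;> simp [S2]
      rw [e1, e4]; norm_num
  · exact (peri_lt h2 hc hx).le

private lemma sum_le_prod_aux (f : ℕ → ℕ) :
    ∀ s : Finset ℕ, s.Nonempty → (∀ i ∈ s, 2 ≤ f i) →
    (∑ i ∈ s, f i) ≤ (∏ i ∈ s, f i) ∧ 2 ≤ ∏ i ∈ s, f i := by
  classical
  intro s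
  induction s using Finset.cons_induction with
  | empty => intro hne _; exact absurd hne (by simp)
  | cons a s ha ih =>
    intro _ hf
    rw [Finset.sum_cons, Finset.prod_cons]
    rcases s.eq_empty_or_nonempty with rfl | hs
    · simp only [Finset.sum_empty, Finset.prod_empty, add_zero, mul_one]
      exact ⟨le_refl _, hf a (by simp)⟩
    · have hf' : ∀ i ∈ s, 2 ≤ f i := fun i hi => hf i (Finset.mem_cons_of_mem hi)
      obtain ⟨hle, h2⟩ := ih hs hf'
      have hfa : 2 ≤ f a := hf a (Finset.mem_cons_self a s)
      constructor
      · have : f a + ∏ i ∈ s, f i ≤ f a * ∏ i ∈ s, f i := by nlinarith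
        omega
      · nlinarith

private lemma sum_lt_prod (s : Finset ℕ) (f : ℕ → ℕ) (hcard : 2 ≤ s.card)
    (hf : ∀ i ∈ s, 2 ≤ f i) {i₀ : ℕ} (hi₀ : i₀ ∈ s) (h3 : 3 ≤ f i₀) :
    (∑ i ∈ s, f i) < (∏ i ∈ s, f i) := by
  classical
  have hne : (s.erase i₀).Nonempty := by
    rw [← Finset.card_pos, Finset.card_erase_of_mem hi₀]
    omega
  have hf' : ∀ i ∈ s.erase i₀, 2 ≤ f i := fun i hi => hf i (Finset.mem_of_mem_erase hi)
  obtain ⟨hle, h2⟩ := sum_le_prod_aux f _ hne hf'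
  rw [← Finset.add_sum_erase s f hi₀, ← Finset.mul_prod_erase s f hi₀]
  nlinarith

/-- Main combinatorial lemma: `r * 2^(S2 r) < 2^W`. -/
private lemma main2 (s : Finset ℕ) (c : ℕ → ℕ) (hne : s.Nonempty)
    (h2 : ∀ i ∈ s, 2 ≤ i) (hc : ∀ i ∈ s, 1 ≤ c i)
    (hexc : ¬(s = {2} ∧ c 2 ≤ 2)) :
    (∑ i ∈ s, i * c i) * 2 ^ S2 (∑ i ∈ s, i * c i)
      < 2 ^ (∑ i ∈ s, (c i * (i - 2 + S2 i) + S2 (c i))) := by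
  classical
  rcases Nat.lt_or_ge s.card 2 with hcard | hcard
  · -- singleton
    obtain ⟨a, rfl⟩ : ∃ a, s = {a} := by
      obtain ⟨a, ha⟩ := hne
      exact ⟨a, Finset.eq_singleton_iff_unique_mem.mpr ⟨ha, fun b hb => by
        by_contra hne'
        have : 2 ≤ s.card := Finset.one_lt_card.mpr ⟨b, hb, a, ha, hne'⟩
        omega⟩⟩
    simp only [Finset.sum_singleton]
    apply peri_lt (h2 a (by simp)) (hc a (by simp))
    rintro ⟨rfl, hle⟩
    exact hexc ⟨rfl, hle⟩
  · -- at least two parts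
    set r := ∑ i ∈ s, i * c i with hr
    have hf : ∀ i ∈ s, 2 ≤ i * c i := fun i hi =>
      le_trans (h2 i hi) (Nat.le_mul_of_pos_right i (hc i hi))
    -- find an element with i * c i ≥ 3
    obtain ⟨i₀, hi₀, h3⟩ : ∃ i₀ ∈ s, 3 ≤ i₀ * c i₀ := by
      by_contra hno
      push_neg at hno
      -- then all i * c i = 2, so all i = 2, so s ⊆ {2}, contradicting card ≥ 2
      have : ∀ i ∈ s, i = 2 := by
        intro i hi
        have ha := hf i hi
        have hb := hno i hi
        have := h2 i hi
        have := hc i hi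
        nlinarith [Nat.le_mul_of_pos_right i (hc i hi)]
      have hsub : s ⊆ {2} := fun i hi => Finset.mem_singleton.mpr (this i hi)
      have := Finset.card_le_card hsub
      simp at this
      omega
    have hsumlt : r < ∏ i ∈ s, i * c i := sum_lt_prod s _ hcard hf hi₀ h3
    have hS : S2 r ≤ ∑ i ∈ s, S2 (i * c i) := S2_sum_le s _
    have hprod : (∏ i ∈ s, i * c i) * 2 ^ (∑ i ∈ s, S2 (i * c i))
        ≤ 2 ^ (∑ i ∈ s, (c i * (i - 2 + S2 i) + S2 (c i))) := by
      have heq : ∏ i ∈ s, (i * c i * 2 ^ S2 (i * c i))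
          = (∏ i ∈ s, i * c i) * 2 ^ (∑ i ∈ s, S2 (i * c i)) := by
        rw [Finset.prod_mul_distrib, Finset.prod_pow_eq_pow_sum]
      rw [← heq, ← Finset.prod_pow_eq_pow_sum]
      exact Finset.prod_le_prod (fun i _ => Nat.zero_le _)
        (fun i hi => peri_le (h2 i hi) (hc i hi))
    calc r * 2 ^ S2 r ≤ r * 2 ^ (∑ i ∈ s, S2 (i * c i)) :=
          Nat.mul_le_mul_left r (Nat.pow_le_pow_right (by norm_num) hS)
      _ < (∏ i ∈ s, i * c i) * 2 ^ (∑ i ∈ s, S2 (i * c i)) :=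
          (Nat.mul_lt_mul_right (pow_pos (by norm_num) _)).mpr hsumlt
      _ ≤ _ := hprod

private lemma kummer_bound {a r M j : ℕ} (hrj : r < 2 ^ j)
    (hM : ∃ i₀, a < i₀ ∧ i₀ ≤ a + r ∧ 2 ^ M ∣ i₀) :
    M + 1 ≤ padicValNat 2 ((2 * (a + r)).choose (2 * a)) + j := by
  rcases le_or_gt (M + 1) j with hj | hj
  · omega
  have hjM : j ≤ M := by omega
  set b := Nat.log 2 (2 * (a + r)) + (M + 2) with hb
  have hkn : 2 * a ≤ 2 * (a + r) := by omega
  have hnb : Nat.log 2 (2 * (a + r)) < b := by omega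
  rw [padicValNat_choose hkn hnb]
  have hsub : Finset.Icc (j + 1) (M + 1) ⊆
      (Finset.Ico 1 b).filter
        (fun e => 2 ^ e ≤ (2 * a) % 2 ^ e + (2 * (a + r) - 2 * a) % 2 ^ e) := by
    intro e he
    rw [Finset.mem_Icc] at he
    rw [Finset.mem_filter, Finset.mem_Ico]
    refine ⟨⟨by omega, by omega⟩, ?_⟩
    have h2r : 2 * (a + r) - 2 * a = 2 * r := by omega
    rw [h2r]
    set E := 2 ^ (e - 1) with hE
    have hEpos : 0 < E := pow_pos (by norm_num) _
    have h2e : 2 ^ e = 2 * E := by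
      rw [hE, ← pow_succ']
      congr 1
      omega
    have hrE : r < E := by
      calc r < 2 ^ j := hrj
        _ ≤ E := Nat.pow_le_pow_right (by norm_num) (by omega)
    have hkey : E ≤ a % E + r := by
      obtain ⟨i₀, hai, hir, hdvd⟩ := hM
      have hEdvd : E ∣ i₀ := dvd_trans (pow_dvd_pow 2 (by omega : e - 1 ≤ M)) hdvd
      obtain ⟨q, rfl⟩ := hEdvd
      by_contra hcon
      push_neg at hcon
      have hdm := Nat.div_add_mod a E
      have h1 : E * q < E * (a / E + 1) := by
        have : E * q ≤ a + r := hir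
        have : a % E + r < E := hcon
        nlinarith [Nat.div_add_mod a E]
      have h2 : q ≤ a / E := by
        have := (Nat.mul_lt_mul_left hEpos).mp h1
        omega
      have h3 : E * q ≤ E * (a / E) := Nat.mul_le_mul_left E h2
      have h4 : E * (a / E) ≤ a := Nat.mul_div_le a E
      omega
    rw [h2e, Nat.mul_mod_mul_left]
    have h2rE : 2 * r % (2 * E) = 2 * r := Nat.mod_eq_of_lt (by omega)
    rw [h2rE]
    omega
  have hcard := Finset.card_le_card hsub
  rw [Nat.card_Icc] at hcard
  omega

private lemma prod_fact_dvd (f c : ℕ → ℕ) :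
    ∀ s : Finset ℕ, (∀ i ∈ s, f i ≠ 0) →
    (∏ i ∈ s, ((f i)! ^ c i * (c i)!)) ∣ (∑ i ∈ s, f i * c i)! := by
  classical
  intro s
  induction s using Finset.cons_induction with
  | empty => simp
  | cons a s ha ih =>
    intro hf
    rw [Finset.sum_cons, Finset.prod_cons]
    have h1 : (f a)! ^ c a * (c a)! ∣ (f a * c a)! := by
      have := Nat.uniformBell_mul_eq (c a) (hf a (by simp))
      refine ⟨(c a).uniformBell (f a), ?_⟩
      rw [mul_comm (f a) (c a), ← this]
      ring
    have h2 := ih (fun i hi => hf i (Finset.mem_cons_of_mem hi))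
    calc (f a)! ^ c a * (c a)! * ∏ i ∈ s, ((f i)! ^ c i * (c i)!)
        ∣ (f a * c a)! * (∑ i ∈ s, f i * c i)! := mul_dvd_mul h1 h2
      _ ∣ (f a * c a + ∑ i ∈ s, f i * c i)! :=
          Nat.factorial_mul_factorial_dvd_factorial_add _ _

private lemma v2_prod (f : ℕ → ℕ) :
    ∀ s : Finset ℕ, (∀ i ∈ s, f i ≠ 0) →
    padicValNat 2 (∏ i ∈ s, f i) = ∑ i ∈ s, padicValNat 2 (f i) := by
  classical
  intro s
  induction s using Finset.cons_induction with
  | empty => simp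
  | cons a s ha ih =>
    intro hf
    rw [Finset.sum_cons, Finset.prod_cons,
      padicValNat.mul (hf a (by simp))
        (Finset.prod_ne_zero_iff.mpr (fun i hi => hf i (Finset.mem_cons_of_mem hi))),
      ih (fun i hi => hf i (Finset.mem_cons_of_mem hi))]

theorem romik_two_adic_multinomial_bound
    (n k : ℕ) (hn : 0 < n) (hk : 0 < k)
    (c : ℕ → ℕ)
    (hsum : ∑ i ∈ Finset.Icc 1 n, c i = k)
    (hwt : ∑ i ∈ Finset.Icc 1 n, i * c i = n)
    (hexc1 : ¬ (∀ i ∈ Finset.Icc 1 n, c i = if i = 1 then n else 0))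
    (hexc2 : ¬ (∀ i ∈ Finset.Icc 1 n,
      c i = if i = 1 then n - 2 else if i = 2 then 1 else 0))
    (hexc3 : ¬ (∀ i ∈ Finset.Icc 1 n,
      c i = if i = 1 then n - 4 else if i = 2 then 2 else 0)) :
    ∃ z : ℤ,
      (2 : ℚ) ^ (n - k) * (Nat.factorial (2 * n) : ℚ) /
          (∏ i ∈ Finset.Icc 1 n, (Nat.factorial (2 * i) : ℚ) ^ (c i) * (Nat.factorial (c i) : ℚ))
        = 2 ^ (1 + (Finset.Ioc (c 1) n).sup (fun i => padicValNat 2 i)) * (z : ℚ) := by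
  classical
  set M := (Finset.Ioc (c 1) n).sup (fun i => padicValNat 2 i) with hM
  set a := c 1 with ha
  have hIcc : Finset.Icc 1 n = insert 1 (Finset.Icc 2 n) := by
    ext x
    simp only [Finset.mem_Icc, Finset.mem_insert]
    omega
  have h1notin : (1 : ℕ) ∉ Finset.Icc 2 n := by simp
  set r := ∑ i ∈ Finset.Icc 2 n, i * c i with hr
  set k₂ := ∑ i ∈ Finset.Icc 2 n, c i with hk2
  have hn_eq : a + r = n := by
    rw [hIcc, Finset.sum_insert h1notin] at hwt
    omega
  have hk_eq : a + k₂ = k := by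
    rw [hIcc, Finset.sum_insert h1notin] at hsum
    omega
  have hk2r : k₂ ≤ r :=
    Finset.sum_le_sum (fun i hi => by
      have h2 : 2 ≤ i := (Finset.mem_Icc.mp hi).1
      exact Nat.le_mul_of_pos_left (c i) (by omega))
  set s := (Finset.Icc 2 n).filter (fun i => c i ≠ 0) with hs
  have hrs : r = ∑ i ∈ s, i * c i := by
    rw [hr, hs]
    exact (Finset.sum_filter_of_ne (fun i hi hiz => by
      intro hc0
      exact hiz (by rw [hc0, Nat.mul_zero]))).symm
  have hk2s : k₂ = ∑ i ∈ s, c i := by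
    rw [hk2, hs]
    exact (Finset.sum_filter_of_ne (fun i hi hiz => hiz)).symm
  have hczero : ∀ i ∈ Finset.Icc 2 n, i ∉ s → c i = 0 := by
    intro i hi hns
    by_contra hcz
    exact hns (Finset.mem_filter.mpr ⟨hi, hcz⟩)
  have hrpos : 0 < r := by
    rcases Nat.eq_zero_or_pos r with hr0 | h
    · exfalso
      apply hexc1
      have hcz : ∀ i' ∈ Finset.Icc 2 n, i' * c i' = 0 :=
        Finset.sum_eq_zero_iff.mp (hr.symm.trans hr0)
      intro i hi
      rw [Finset.mem_Icc] at hi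
      rcases Nat.eq_or_lt_of_le hi.1 with h1 | h2
      · rw [if_pos h1.symm, ← h1]
        omega
      · rw [if_neg (by omega)]
        have h0 : i * c i = 0 := hcz i (Finset.mem_Icc.mpr ⟨by omega, hi.2⟩)
        rcases Nat.mul_eq_zero.mp h0 with h' | h'
        · omega
        · exact h'
    · exact h
  have hsne : s.Nonempty := by
    rw [Finset.nonempty_iff_ne_empty]
    intro hempty
    rw [hrs, hempty, Finset.sum_empty] at hrpos
    omega
  have han : a < n := by omega
  have hexcs : ¬(s = {2} ∧ c 2 ≤ 2) := by
    rintro ⟨hs2, hc2⟩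
    have h2mem : (2 : ℕ) ∈ s := by rw [hs2]; exact Finset.mem_singleton_self 2
    have hc2pos : c 2 ≠ 0 := (Finset.mem_filter.mp h2mem).2
    have h2n : 2 ≤ n := (Finset.mem_Icc.mp (Finset.mem_filter.mp h2mem).1).2
    have hr2 : r = 2 * c 2 := by rw [hrs, hs2, Finset.sum_singleton]
    have hcz : ∀ i ∈ Finset.Icc 2 n, i ≠ 2 → c i = 0 := by
      intro i hi hne
      apply hczero i hi
      rw [hs2, Finset.mem_singleton]
      exact hne
    rcases (by omega : c 2 = 1 ∨ c 2 = 2) with h1 | h1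
    · apply hexc2
      intro i hi
      rw [Finset.mem_Icc] at hi
      rcases Nat.eq_or_lt_of_le hi.1 with he | hlt
      · rw [if_pos he.symm, ← he]
        omega
      · rw [if_neg (by omega)]
        by_cases hi2 : i = 2
        · rw [if_pos hi2, hi2]; exact h1
        · rw [if_neg hi2]
          exact hcz i (Finset.mem_Icc.mpr ⟨by omega, hi.2⟩) hi2
    · apply hexc3
      intro i hi
      rw [Finset.mem_Icc] at hi
      rcases Nat.eq_or_lt_of_le hi.1 with he | hlt
      · rw [if_pos he.symm, ← he]
        omega
      · rw [if_neg (by omega)]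
        by_cases hi2 : i = 2
        · rw [if_pos hi2, hi2]; exact h1
        · rw [if_neg hi2]
          exact hcz i (Finset.mem_Icc.mpr ⟨by omega, hi.2⟩) hi2
  -- the main combinatorial bound
  set W := ∑ i ∈ s, (c i * (i - 2 + S2 i) + S2 (c i)) with hW
  have hs2le : ∀ i ∈ s, 2 ≤ i := fun i hi => (Finset.mem_Icc.mp (Finset.mem_filter.mp hi).1).1
  have hsc : ∀ i ∈ s, 1 ≤ c i := fun i hi =>
    Nat.one_le_iff_ne_zero.mpr (Finset.mem_filter.mp hi).2
  have hmain2 := main2 s c hsne hs2le hsc hexcs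
  rw [← hrs, ← hW] at hmain2
  set j := Nat.log 2 r + 1 with hj
  have hI1 : S2 r + j ≤ W := by
    have h1 : 2 ^ Nat.log 2 r ≤ r := Nat.pow_log_le_self 2 (by omega)
    have h2 : 2 ^ (Nat.log 2 r + S2 r) < 2 ^ W := by
      calc 2 ^ (Nat.log 2 r + S2 r) = 2 ^ Nat.log 2 r * 2 ^ S2 r := pow_add 2 _ _
        _ ≤ r * 2 ^ S2 r := Nat.mul_le_mul_right _ h1
        _ < 2 ^ W := hmain2
    have := (Nat.pow_lt_pow_iff_right (by norm_num : 1 < 2)).mp h2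
    omega
  have hrj : r < 2 ^ j := Nat.lt_pow_succ_log_self (by norm_num) r
  -- the Kummer bound
  obtain ⟨i₀, hi₀mem, hi₀⟩ := Finset.exists_mem_eq_sup (Finset.Ioc a n)
    (by rw [Finset.nonempty_Ioc]; omega) (fun i => padicValNat 2 i)
  rw [Finset.mem_Ioc] at hi₀mem
  have hkum : M + 1 ≤ padicValNat 2 ((2 * (a + r)).choose (2 * a)) + j := by
    apply kummer_bound hrj
    refine ⟨i₀, hi₀mem.1, by omega, ?_⟩
    rw [hM, hi₀]
    exact pow_padicValNat_dvd
  set κ := padicValNat 2 ((2 * (a + r)).choose (2 * a)) with hκ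
  -- valuation bookkeeping
  set D := ∏ i ∈ Finset.Icc 1 n, ((2 * i)! ^ c i * (c i)!) with hD
  have hDfac : ∀ i ∈ Finset.Icc 1 n, (2 * i)! ^ c i * (c i)! ≠ 0 :=
    fun i _ => Nat.mul_ne_zero (pow_ne_zero _ (Nat.factorial_ne_zero _)) (Nat.factorial_ne_zero _)
  have hDne : D ≠ 0 := Finset.prod_ne_zero_iff.mpr hDfac
  have hDdvd : D ∣ (2 * n)! := by
    have hd := prod_fact_dvd (fun i => 2 * i) c (Finset.Icc 1 n) (fun i hi => by
      have := (Finset.mem_Icc.mp hi).1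
      positivity)
    have hsum2 : ∑ i ∈ Finset.Icc 1 n, 2 * i * c i = 2 * n := by
      have he : ∑ i ∈ Finset.Icc 1 n, 2 * i * c i = 2 * ∑ i ∈ Finset.Icc 1 n, i * c i := by
        rw [Finset.mul_sum]
        exact Finset.sum_congr rfl (fun i _ => by ring)
      rw [he, hwt]
    rwa [hsum2] at hd
  -- compute v2 of D
  have hv2D : padicValNat 2 D =
      a + padicValNat 2 (a !) +
      (∑ i ∈ s, c i * padicValNat 2 ((2 * i)!) + ∑ i ∈ s, padicValNat 2 ((c i)!)) := by
    rw [hD, v2_prod _ _ hDfac, hIcc, Finset.sum_insert h1notin]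
    have hterm : ∀ i : ℕ, padicValNat 2 ((2 * i)! ^ c i * (c i)!) =
        c i * padicValNat 2 ((2 * i)!) + padicValNat 2 ((c i)!) := by
      intro i
      rw [padicValNat.mul (pow_ne_zero _ (Nat.factorial_ne_zero _)) (Nat.factorial_ne_zero _),
        padicValNat.pow _ _]
    have h1term : padicValNat 2 ((2 * 1)! ^ c 1 * (c 1)!) = a + padicValNat 2 (a !) := by
      rw [hterm 1]
      have : padicValNat 2 ((2 * 1)!) = 1 := by norm_num [Nat.factorial]
      rw [this, ← ha]
      omega
    rw [h1term]
    have hrest : ∑ i ∈ Finset.Icc 2 n, padicValNat 2 ((2 * i)! ^ c i * (c i)!)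
        = ∑ i ∈ s, (c i * padicValNat 2 ((2 * i)!) + padicValNat 2 ((c i)!)) := by
      calc ∑ i ∈ Finset.Icc 2 n, padicValNat 2 ((2 * i)! ^ c i * (c i)!)
          = ∑ i ∈ Finset.Icc 2 n,
              (c i * padicValNat 2 ((2 * i)!) + padicValNat 2 ((c i)!)) :=
            Finset.sum_congr rfl (fun i _ => hterm i)
        _ = ∑ i ∈ s, (c i * padicValNat 2 ((2 * i)!) + padicValNat 2 ((c i)!)) := by
            rw [hs]
            exact (Finset.sum_filter_of_ne (fun i hi hne => by
              intro hc0
              apply hne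
              rw [hc0]
              simp [padicValNat.one])).symm
    rw [hrest, Finset.sum_add_distrib]
  -- factorial valuation identities
  have hfact2n : padicValNat 2 ((2 * n)!) =
      κ + padicValNat 2 ((2 * a)!) + padicValNat 2 ((2 * r)!) := by
    have hle : 2 * a ≤ 2 * (a + r) := by omega
    have hkey := Nat.choose_mul_factorial_mul_factorial hle
    have hsub : 2 * (a + r) - 2 * a = 2 * r := by omega
    rw [hsub] at hkey
    have : padicValNat 2 ((2 * (a + r)).choose (2 * a) * (2 * a)! * (2 * r)!)
        = κ + padicValNat 2 ((2 * a)!) + padicValNat 2 ((2 * r)!) := by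
      rw [padicValNat.mul (Nat.mul_ne_zero
          (Nat.choose_pos hle).ne' (Nat.factorial_ne_zero _)) (Nat.factorial_ne_zero _),
        padicValNat.mul (Nat.choose_pos hle).ne' (Nat.factorial_ne_zero _)]
    rw [← this, hkey, hn_eq]
  have hfact2a : padicValNat 2 ((2 * a)!) = padicValNat 2 (a !) + a :=
    padicValNat_factorial_mul a
  have hA3 : padicValNat 2 ((2 * r)!) + S2 r = 2 * r := by
    have h1 := v2_factorial (2 * r)
    rw [S2_two_mul] at h1
    omega
  -- sums over s
  have hA1 : ∑ i ∈ s, c i * padicValNat 2 ((2 * i)!) + ∑ i ∈ s, c i * S2 i = 2 * r := by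
    rw [← Finset.sum_add_distrib, hrs, Finset.mul_sum]
    refine Finset.sum_congr rfl (fun i _ => ?_)
    have h1 := v2_factorial (2 * i)
    rw [S2_two_mul] at h1
    calc c i * padicValNat 2 ((2 * i)!) + c i * S2 i
        = c i * (padicValNat 2 ((2 * i)!) + S2 i) := (Nat.mul_add _ _ _).symm
      _ = c i * (2 * i) := by rw [h1]
      _ = 2 * (i * c i) := by ring
  have hA2 : ∑ i ∈ s, padicValNat 2 ((c i)!) + ∑ i ∈ s, S2 (c i) = k₂ := by
    rw [← Finset.sum_add_distrib, hk2s]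
    exact Finset.sum_congr rfl (fun i _ => v2_factorial (c i))
  have hA4 : W = ∑ i ∈ s, (c i * (i - 2) + c i * S2 i) + ∑ i ∈ s, S2 (c i) := by
    rw [hW, Finset.sum_add_distrib]
    congr 1
    exact Finset.sum_congr rfl (fun i _ => by rw [Nat.mul_add])
  have hA4' : ∑ i ∈ s, (c i * (i - 2) + c i * S2 i)
      = ∑ i ∈ s, c i * (i - 2) + ∑ i ∈ s, c i * S2 i := Finset.sum_add_distrib
  have hA5 : ∑ i ∈ s, c i * (i - 2) + 2 * k₂ = r := by
    rw [hk2s, hrs, Finset.mul_sum, ← Finset.sum_add_distrib]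
    refine Finset.sum_congr rfl (fun i hi => ?_)
    have h2 : 2 ≤ i := hs2le i hi
    have : i - 2 + 2 = i := by omega
    calc c i * (i - 2) + 2 * c i = c i * ((i - 2) + 2) := by ring
      _ = i * c i := by rw [this]; ring
  -- the key inequality
  have hstar : 1 + M + padicValNat 2 D ≤ (n - k) + padicValNat 2 ((2 * n)!) := by
    have hnk : n - k = r - k₂ := by omega
    omega
  -- assemble
  set Q := (2 * n)! / D with hQdef
  have hQ : D * Q = (2 * n)! := Nat.mul_div_cancel' hDdvd
  have hQne : Q ≠ 0 := by
    intro h0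
    rw [h0, Nat.mul_zero] at hQ
    exact Nat.factorial_ne_zero _ hQ.symm
  set A := 2 ^ (n - k) * Q with hA
  have hAne : A ≠ 0 := Nat.mul_ne_zero (pow_ne_zero _ (by norm_num)) hQne
  have hv2sum : padicValNat 2 D + padicValNat 2 Q = padicValNat 2 ((2 * n)!) := by
    rw [← padicValNat.mul hDne hQne, hQ]
  have hv2A : padicValNat 2 A = (n - k) + padicValNat 2 Q := by
    rw [hA, padicValNat.mul (pow_ne_zero _ (by norm_num)) hQne, padicValNat.prime_pow]
  have hgoal : 1 + M ≤ padicValNat 2 A := by omega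
  have hdvdA : 2 ^ (1 + M) ∣ A :=
    dvd_trans (pow_dvd_pow 2 hgoal) pow_padicValNat_dvd
  refine ⟨((A / 2 ^ (1 + M) : ℕ) : ℤ), ?_⟩
  have hzA : 2 ^ (1 + M) * (A / 2 ^ (1 + M)) = A := Nat.mul_div_cancel' hdvdA
  -- final rational computation
  have hNat : 2 ^ (n - k) * (2 * n)! = 2 ^ (1 + M) * (A / 2 ^ (1 + M)) * D := by
    rw [hzA, hA, ← hQ]
    ring
  have hDcast : (∏ i ∈ Finset.Icc 1 n,
      (Nat.factorial (2 * i) : ℚ) ^ c i * (Nat.factorial (c i) : ℚ)) = (D : ℚ) := by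
    rw [hD]
    push_cast
    rfl
  rw [hDcast, div_eq_iff (Nat.cast_ne_zero.mpr hDne)]
  exact_mod_cast hNat
end
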